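/- arXiv:0803.1477 — 4 statements merged into one kernel-verified Lean document; each statement's English description precedes it below -/
import Mathlib

section
/- Let G = (V,E) be a finite simple graph, let R be a commutative ring, let v : E → R be edge weights, and let q1, q2 ∈ R. Then Z_G(q1 + q2, v) = Σ_{W ⊆ V} Z_{G[W]}(q1, v) · Z_{G[V∖W]}(q2, v), where the sum runs over all subsets W of V and G[W], G[V∖W] denote the induced subgraphs of G on W and its complement (with the restricted edge weights). -/
open Finset SimpleGraph

/-- The number of connected components of the graph on the vertex set `W`
with edge set `A` (isolated vertices count as components). -/
noncomputable def kcomp {V : Type*} [Fintype V] [DecidableEq V]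
    (W : Finset V) (A : Finset (Sym2 V)) : ℕ :=
  Nat.card ((SimpleGraph.fromEdgeSet (A : Set (Sym2 V))).induce (W : Set V)).ConnectedComponent

/-- The edges of `G` with both endpoints in `W`, i.e. the edges of the
induced subgraph `G[W]`. -/
def edgesWithin {V : Type*} [Fintype V] [DecidableEq V]
    (G : SimpleGraph V) [DecidableRel G.Adj] (W : Finset V) : Finset (Sym2 V) :=
  G.edgeFinset.filter (fun e => ∀ x ∈ e, x ∈ W)

/-- The multivariate Tutte polynomial of the induced subgraph `G[W]`:
`Z_{G[W]}(q,v) = Σ_{A ⊆ E(G[W])} q^{k(A)} ∏_{e ∈ A} v_e`. -/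
noncomputable def Zmv {V : Type*} [Fintype V] [DecidableEq V] {R : Type*} [CommRing R]
    (G : SimpleGraph V) [DecidableRel G.Adj] (W : Finset V) (q : R) (v : Sym2 V → R) : R :=
  ∑ A ∈ (edgesWithin G W).powerset, q ^ kcomp W A * ∏ e ∈ A, v e

/-- `Ẑ_{G[W]}(q,v) = Σ_{A ⊆ E(G[W])} q^{k(A)-1} ∏_{e ∈ A} v_e`. -/
noncomputable def ZhatMv {V : Type*} [Fintype V] [DecidableEq V] {R : Type*} [CommRing R]
    (G : SimpleGraph V) [DecidableRel G.Adj] (W : Finset V) (q : R) (v : Sym2 V → R) : R :=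
  ∑ A ∈ (edgesWithin G W).powerset, q ^ (kcomp W A - 1) * ∏ e ∈ A, v e

/-- The generating polynomial of connected spanning subgraphs of `G[W]`:
`C_{G[W]}(v) = Σ_{A ⊆ E(G[W]) : k(A)=1} ∏_{e ∈ A} v_e`. -/
noncomputable def Cmv {V : Type*} [Fintype V] [DecidableEq V] {R : Type*} [CommRing R]
    (G : SimpleGraph V) [DecidableRel G.Adj] (W : Finset V) (v : Sym2 V → R) : R :=
  ∑ A ∈ (edgesWithin G W).powerset.filter (fun A => kcomp W A = 1), ∏ e ∈ A, v e

section Aux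
variable {V : Type*} [Fintype V] [DecidableEq V]

/-- `W` is closed w.r.t. the edge set `A`: every edge of `A` lies entirely
inside `W` or entirely outside `W`. -/
def closedIn (A : Finset (Sym2 V)) (W : Finset V) : Prop :=
  ∀ e ∈ A, (∀ x ∈ e, x ∈ W) ∨ (∀ x ∈ e, x ∉ W)

instance (A : Finset (Sym2 V)) : DecidablePred (closedIn A) := fun _ => by
  unfold closedIn; infer_instance

lemma walk_closed {H : SimpleGraph V} {W : Finset V}
    (hW : ∀ x y, H.Adj x y → (x ∈ W ↔ y ∈ W)) :
    ∀ {x y : V}, H.Walk x y → x ∈ W → y ∈ W := by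
  intro x y p
  induction p with
  | nil => exact id
  | cons h _ ih => intro hx; exact ih ((hW _ _ h).mp hx)

lemma reachable_induce_of_closed {H : SimpleGraph V} {W : Finset V}
    (hW : ∀ x y, H.Adj x y → (x ∈ W ↔ y ∈ W)) :
    ∀ {x y : V} (_ : H.Walk x y) (hx : x ∈ W) (hy : y ∈ W),
      (H.induce (W : Set V)).Reachable ⟨x, hx⟩ ⟨y, hy⟩ := by
  intro x y p
  induction p with
  | nil => intro hx hy; exact Reachable.refl _
  | @cons a b c h p ih =>
    intro hx hy
    have hb : b ∈ W := (hW _ _ h).mp hx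
    have hadj : (H.induce (W : Set V)).Adj ⟨a, hx⟩ ⟨b, hb⟩ := h
    exact hadj.reachable.trans (ih hb hy)

lemma card_cc_induce {H : SimpleGraph V} [DecidableEq H.ConnectedComponent] {W : Finset V}
    (hW : ∀ x y, H.Adj x y → (x ∈ W ↔ y ∈ W)) :
    Nat.card (H.induce (W : Set V)).ConnectedComponent
      = (W.image H.connectedComponentMk).card := by
  classical
  have hresp : ∀ (a b : (W : Set V)) (p : (H.induce (W : Set V)).Walk a b), p.IsPath →
      (⟨H.connectedComponentMk a.1, mem_image_of_mem _ a.2⟩ :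
        {c // c ∈ W.image H.connectedComponentMk})
      = ⟨H.connectedComponentMk b.1, mem_image_of_mem _ b.2⟩ := by
    intro a b p _
    have : H.Reachable a.1 b.1 :=
      (p.map (SimpleGraph.Embedding.induce (W : Set V)).toHom).reachable
    exact Subtype.ext (ConnectedComponent.sound this)
  set f : (H.induce (W : Set V)).ConnectedComponent →
      {c // c ∈ W.image H.connectedComponentMk} :=
    fun c => c.lift (fun a => ⟨H.connectedComponentMk a.1, mem_image_of_mem _ a.2⟩) hresp
    with hf
  have hbij : Function.Bijective f := by
    constructor
    · intro c d
      refine ConnectedComponent.ind₂ (fun a b h => ?_) c d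
      have : H.connectedComponentMk a.1 = H.connectedComponentMk b.1 :=
        congrArg Subtype.val h
      obtain ⟨p⟩ := ConnectedComponent.exact this
      have := reachable_induce_of_closed hW p a.2 b.2
      exact ConnectedComponent.sound (by simpa using this)
    · rintro ⟨c, hc⟩
      obtain ⟨x, hxW, rfl⟩ := mem_image.mp hc
      exact ⟨(H.induce (W : Set V)).connectedComponentMk ⟨x, hxW⟩, rfl⟩
  rw [Nat.card_congr (Equiv.ofBijective f hbij), Nat.card_eq_finsetCard]

lemma kcomp_congr {W : Finset V} {A B : Finset (Sym2 V)}
    (h : ∀ x y : V, x ∈ W → y ∈ W → (s(x, y) ∈ A ↔ s(x, y) ∈ B)) :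
    kcomp W A = kcomp W B := by
  have : (SimpleGraph.fromEdgeSet (A : Set (Sym2 V))).induce (W : Set V)
      = (SimpleGraph.fromEdgeSet (B : Set (Sym2 V))).induce (W : Set V) := by
    ext ⟨x, hx⟩ ⟨y, hy⟩
    simp only [comap_adj, Function.Embedding.coe_subtype, fromEdgeSet_adj, Finset.mem_coe]
    rw [h x y hx hy]
  unfold kcomp
  rw [this]
end Aux

section Aux2
variable {V : Type*} [Fintype V] [DecidableEq V]

lemma closedIn_iff_adj (A : Finset (Sym2 V)) (W : Finset V) :
    closedIn A W ↔
      ∀ x y, (fromEdgeSet (A : Set (Sym2 V))).Adj x y → (x ∈ W ↔ y ∈ W) := by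
  constructor
  · intro h x y hadj
    have he : s(x, y) ∈ A := by simpa using hadj.1
    rcases h _ he with h' | h'
    · simp [h' x (Sym2.mem_mk_left x y), h' y (Sym2.mem_mk_right x y)]
    · simp [h' x (Sym2.mem_mk_left x y), h' y (Sym2.mem_mk_right x y)]
  · intro h e he
    induction e using Sym2.ind with
    | _ a b =>
      by_cases hab : a = b
      · subst hab
        by_cases haW : a ∈ W
        · left; intro x hx; rcases Sym2.mem_iff.mp hx with rfl | rfl <;> exact haW
        · right; intro x hx; rcases Sym2.mem_iff.mp hx with rfl | rfl <;> exact haW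
      · have hadj : (fromEdgeSet (A : Set (Sym2 V))).Adj a b := by
          simp [fromEdgeSet_adj, he, hab]
        have hiff := h a b hadj
        by_cases haW : a ∈ W
        · left; intro x hx
          rcases Sym2.mem_iff.mp hx with rfl | rfl
          · exact haW
          · exact hiff.mp haW
        · right; intro x hx
          rcases Sym2.mem_iff.mp hx with rfl | rfl
          · exact haW
          · exact fun hbW => haW (hiff.mpr hbW)

lemma kcomp_filter (A : Finset (Sym2 V))
    [DecidableEq (fromEdgeSet (A : Set (Sym2 V))).ConnectedComponent]
    (S : Finset (fromEdgeSet (A : Set (Sym2 V))).ConnectedComponent) :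
    kcomp (univ.filter
      (fun x => (fromEdgeSet (A : Set (Sym2 V))).connectedComponentMk x ∈ S)) A
      = S.card := by
  classical
  have hW : ∀ x y, (fromEdgeSet (A : Set (Sym2 V))).Adj x y →
      (x ∈ univ.filter
        (fun x => (fromEdgeSet (A : Set (Sym2 V))).connectedComponentMk x ∈ S) ↔
       y ∈ univ.filter
        (fun x => (fromEdgeSet (A : Set (Sym2 V))).connectedComponentMk x ∈ S)) := by
    intro x y h
    simp [ConnectedComponent.connectedComponentMk_eq_of_adj h]
  rw [kcomp, card_cc_induce hW]
  congr 1
  ext c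
  simp only [mem_image, mem_filter, mem_univ, true_and]
  constructor
  · rintro ⟨x, hx, rfl⟩; exact hx
  · intro hc
    obtain ⟨x, rfl⟩ := c.exists_rep
    exact ⟨x, hc, rfl⟩

end Aux2

section Aux3
variable {V : Type*} [Fintype V] [DecidableEq V]

lemma keylemma {R : Type*} [CommRing R] (A : Finset (Sym2 V)) (q1 q2 : R) :
    (q1 + q2) ^ kcomp Finset.univ A
      = ∑ W ∈ univ.filter (closedIn A),
          q1 ^ kcomp W A * q2 ^ kcomp (Finset.univ \ W) A := by
  classical
  haveI : Fintype (fromEdgeSet (A : Set (Sym2 V))).ConnectedComponent := Fintype.ofFinite _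
  have hk : kcomp Finset.univ A
      = Fintype.card (fromEdgeSet (A : Set (Sym2 V))).ConnectedComponent := by
    have h0 := kcomp_filter A (univ : Finset (fromEdgeSet (A : Set (Sym2 V))).ConnectedComponent)
    simpa [Finset.filter_true_of_mem] using h0
  have hprod := Fintype.prod_add (fun _ : (fromEdgeSet (A : Set (Sym2 V))).ConnectedComponent => q1)
    (fun _ => q2)
  simp only [prod_const] at hprod
  rw [hk, ← card_univ, hprod]
  refine Finset.sum_nbij'
    (fun t => univ.filter (fun x => (fromEdgeSet (A : Set (Sym2 V))).connectedComponentMk x ∈ t))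
    (fun W => W.image (fromEdgeSet (A : Set (Sym2 V))).connectedComponentMk)
    ?_ ?_ ?_ ?_ ?_
  · intro t _
    simp only [mem_filter, mem_univ, true_and]
    rw [closedIn_iff_adj]
    intro x y hadj
    simp [mem_filter, ConnectedComponent.connectedComponentMk_eq_of_adj hadj]
  · intro W _; exact mem_univ _
  · intro t _
    ext c
    simp only [mem_image, mem_filter, mem_univ, true_and]
    constructor
    · rintro ⟨x, hx, rfl⟩; exact hx
    · intro hc; obtain ⟨x, rfl⟩ := c.exists_rep; exact ⟨x, hc, rfl⟩
  · intro W hW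
    have hadjW : ∀ x y, (fromEdgeSet (A : Set (Sym2 V))).Adj x y → (x ∈ W ↔ y ∈ W) :=
      (closedIn_iff_adj A W).mp (mem_filter.mp hW).2
    ext x
    simp only [mem_filter, mem_univ, true_and, mem_image]
    constructor
    · rintro ⟨y, hyW, hyx⟩
      obtain ⟨p⟩ := ConnectedComponent.exact hyx
      exact walk_closed hadjW p hyW
    · intro hx; exact ⟨x, hx, rfl⟩
  · intro t _
    have h1 := kcomp_filter A t
    have h2 : Finset.univ \
        (univ.filter (fun x => (fromEdgeSet (A : Set (Sym2 V))).connectedComponentMk x ∈ t))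
        = univ.filter (fun x => (fromEdgeSet (A : Set (Sym2 V))).connectedComponentMk x ∈ tᶜ) := by
      ext x; simp
    rw [h1, h2, kcomp_filter A tᶜ]

end Aux3

section Aux4
variable {V : Type*} [Fintype V] [DecidableEq V]

lemma perW {R : Type*} [CommRing R] (G : SimpleGraph V) [DecidableRel G.Adj]
    (v : Sym2 V → R) (q1 q2 : R) (W : Finset V) :
    ∑ A ∈ (edgesWithin G Finset.univ).powerset.filter (fun A => closedIn A W),
        q1 ^ kcomp W A * q2 ^ kcomp (Finset.univ \ W) A * ∏ e ∈ A, v e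
      = Zmv G W q1 v * Zmv G (Finset.univ \ W) q2 v := by
  classical
  rw [Zmv, Zmv, Finset.sum_mul_sum, ← Finset.sum_product']
  have hsplit : ∀ A ∈ (edgesWithin G Finset.univ).powerset.filter (fun A => closedIn A W),
      A.filter (fun e => ∀ x ∈ e, x ∈ W) ∪ A.filter (fun e => ∀ x ∈ e, x ∈ Finset.univ \ W)
        = A := by
    intro A hA
    have hcl : closedIn A W := (mem_filter.mp hA).2
    ext e
    simp only [mem_union, mem_filter]
    constructor
    · rintro (h | h) <;> exact h.1
    · intro he
      rcases hcl e he with h' | h'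
      · exact Or.inl ⟨he, h'⟩
      · exact Or.inr ⟨he, fun x hx => mem_sdiff.mpr ⟨mem_univ x, h' x hx⟩⟩
  have hdisj : ∀ A : Finset (Sym2 V),
      Disjoint (A.filter (fun e => ∀ x ∈ e, x ∈ W))
        (A.filter (fun e => ∀ x ∈ e, x ∈ Finset.univ \ W)) := by
    intro A
    rw [Finset.disjoint_left]
    intro e he1 he2
    have h1 := (mem_filter.mp he1).2
    have h2 := (mem_filter.mp he2).2
    induction e using Sym2.ind with
    | _ a b =>
      have ha1 := h1 a (Sym2.mem_mk_left a b)
      have ha2 := h2 a (Sym2.mem_mk_left a b)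
      exact (mem_sdiff.mp ha2).2 ha1
  refine Finset.sum_nbij'
    (fun A => (A.filter (fun e => ∀ x ∈ e, x ∈ W),
               A.filter (fun e => ∀ x ∈ e, x ∈ Finset.univ \ W)))
    (fun p => p.1 ∪ p.2) ?_ ?_ ?_ ?_ ?_
  · intro A hA
    obtain ⟨hpow, -⟩ := mem_filter.mp hA
    have hAE : A ⊆ edgesWithin G Finset.univ := mem_powerset.mp hpow
    rw [Finset.mem_product]
    constructor
    · rw [mem_powerset]
      intro e he
      obtain ⟨heA, hP⟩ := mem_filter.mp he
      exact mem_filter.mpr ⟨(mem_filter.mp (hAE heA)).1, hP⟩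
    · rw [mem_powerset]
      intro e he
      obtain ⟨heA, hP⟩ := mem_filter.mp he
      exact mem_filter.mpr ⟨(mem_filter.mp (hAE heA)).1, hP⟩
  · intro p hp
    rw [Finset.mem_product] at hp
    obtain ⟨hp1, hp2⟩ := hp
    rw [mem_powerset] at hp1 hp2
    rw [mem_filter, mem_powerset]
    constructor
    · intro e he
      rcases mem_union.mp he with h | h
      · exact mem_filter.mpr ⟨(mem_filter.mp (hp1 h)).1, fun x _ => mem_univ x⟩
      · exact mem_filter.mpr ⟨(mem_filter.mp (hp2 h)).1, fun x _ => mem_univ x⟩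
    · intro e he
      rcases mem_union.mp he with h | h
      · exact Or.inl (mem_filter.mp (hp1 h)).2
      · exact Or.inr fun x hx => (mem_sdiff.mp ((mem_filter.mp (hp2 h)).2 x hx)).2
  · exact hsplit
  · intro p hp
    rw [Finset.mem_product] at hp
    obtain ⟨hp1, hp2⟩ := hp
    rw [mem_powerset] at hp1 hp2
    have hP1 : ∀ e ∈ p.1, ∀ x ∈ e, x ∈ W :=
      fun e he => (mem_filter.mp (hp1 he)).2
    have hP2 : ∀ e ∈ p.2, ∀ x ∈ e, x ∈ Finset.univ \ W :=
      fun e he => (mem_filter.mp (hp2 he)).2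
    have hnot : ∀ e : Sym2 V, (∀ x ∈ e, x ∈ W) → (∀ x ∈ e, x ∈ Finset.univ \ W) → False := by
      intro e h1 h2
      induction e using Sym2.ind with
      | _ a b =>
        exact (mem_sdiff.mp (h2 a (Sym2.mem_mk_left a b))).2 (h1 a (Sym2.mem_mk_left a b))
    have e1 : (p.1 ∪ p.2).filter (fun e => ∀ x ∈ e, x ∈ W) = p.1 := by
      ext e
      simp only [mem_filter, mem_union]
      constructor
      · rintro ⟨h | h, hP⟩
        · exact h
        · exact absurd (hP2 e h) (fun hc => hnot e hP hc)
      · intro h; exact ⟨Or.inl h, hP1 e h⟩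
    have e2 : (p.1 ∪ p.2).filter (fun e => ∀ x ∈ e, x ∈ Finset.univ \ W) = p.2 := by
      ext e
      simp only [mem_filter, mem_union]
      constructor
      · rintro ⟨h | h, hP⟩
        · exact absurd hP (fun hc => hnot e (hP1 e h) hc)
        · exact h
      · intro h; exact ⟨Or.inr h, hP2 e h⟩
    exact Prod.ext e1 e2
  · intro A hA
    have k1 : kcomp W A = kcomp W (A.filter (fun e => ∀ x ∈ e, x ∈ W)) := by
      refine kcomp_congr fun x y hx hy => ?_
      constructor
      · intro h
        refine mem_filter.mpr ⟨h, fun z hz => ?_⟩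
        rcases Sym2.mem_iff.mp hz with rfl | rfl
        · exact hx
        · exact hy
      · exact fun h => (mem_filter.mp h).1
    have k2 : kcomp (Finset.univ \ W) A
        = kcomp (Finset.univ \ W) (A.filter (fun e => ∀ x ∈ e, x ∈ Finset.univ \ W)) := by
      refine kcomp_congr fun x y hx hy => ?_
      constructor
      · intro h
        refine mem_filter.mpr ⟨h, fun z hz => ?_⟩
        rcases Sym2.mem_iff.mp hz with rfl | rfl
        · exact hx
        · exact hy
      · exact fun h => (mem_filter.mp h).1
    have hprod : ∏ e ∈ A, v e
        = (∏ e ∈ A.filter (fun e => ∀ x ∈ e, x ∈ W), v e)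
          * ∏ e ∈ A.filter (fun e => ∀ x ∈ e, x ∈ Finset.univ \ W), v e := by
      conv_lhs => rw [← hsplit A hA]
      exact Finset.prod_union (hdisj A)
    rw [k1, k2, hprod]
    ring

end Aux4


theorem stmt12 {V : Type*} [Fintype V] [DecidableEq V] {R : Type*} [CommRing R]
    (G : SimpleGraph V) [DecidableRel G.Adj] (v : Sym2 V → R) (q1 q2 : R) :
    Zmv G Finset.univ (q1 + q2) v
      = ∑ W : Finset V, Zmv G W q1 v * Zmv G (Finset.univ \ W) q2 v := by
  classical
  rw [Zmv]
  calc ∑ A ∈ (edgesWithin G Finset.univ).powerset, (q1 + q2) ^ kcomp Finset.univ A * ∏ e ∈ A, v e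
      = ∑ A ∈ (edgesWithin G Finset.univ).powerset, ∑ W ∈ (univ : Finset (Finset V)),
          if closedIn A W then
            q1 ^ kcomp W A * q2 ^ kcomp (Finset.univ \ W) A * ∏ e ∈ A, v e
          else 0 := by
        refine sum_congr rfl fun A _ => ?_
        rw [keylemma A q1 q2, Finset.sum_mul, sum_filter]
    _ = ∑ W ∈ (univ : Finset (Finset V)), ∑ A ∈ (edgesWithin G Finset.univ).powerset,
          if closedIn A W then
            q1 ^ kcomp W A * q2 ^ kcomp (Finset.univ \ W) A * ∏ e ∈ A, v e
          else 0 := Finset.sum_comm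
    _ = ∑ W : Finset V, Zmv G W q1 v * Zmv G (Finset.univ \ W) q2 v := by
        refine sum_congr rfl fun W _ => ?_
        rw [← sum_filter]
        exact perW G v q1 q2 W
end

section
/- Let G = (V,E) be a finite simple graph, let R be a commutative ring, let v : E → R be edge weights, let q1, q2 ∈ R, and fix a vertex i ∈ V. Then Ẑ_G(q1 + q2, v) = Σ_{W ⊆ V, i ∈ W} Ẑ_{G[W]}(q1, v) · Z_{G[V∖W]}(q2, v), where the sum runs over all subsets W of V containing i. -/
open Finset SimpleGraph

section aux
set_option linter.unusedSectionVars false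
variable {V : Type*} [Fintype V] [DecidableEq V]

lemma sym2_exists_mem (e : Sym2 V) : ∃ x, x ∈ e := by
  induction e using Sym2.ind with
  | _ a b => exact ⟨a, Sym2.mem_mk_left a b⟩

lemma edgesWithin_disjoint (G : SimpleGraph V) [DecidableRel G.Adj] (W : Finset V) :
    Disjoint (edgesWithin G W) (edgesWithin G (univ \ W)) := by
  rw [Finset.disjoint_left]
  intro e he1 he2
  obtain ⟨x, hx⟩ := sym2_exists_mem e
  have h1 := (Finset.mem_filter.mp he1).2 x hx
  have h2 := (Finset.mem_filter.mp he2).2 x hx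
  simp only [Finset.mem_sdiff, Finset.mem_univ, true_and] at h2
  exact h2 h1

lemma walk_reach {H : SimpleGraph V} {W : Set V}
    (hW : ∀ ⦃x y⦄, x ∈ W → H.Adj x y → y ∈ W) :
    ∀ {x y : V} (_ : H.Walk x y) (hx : x ∈ W),
      ∃ hy : y ∈ W, (H.induce W).Reachable ⟨x, hx⟩ ⟨y, hy⟩ := by
  intro x y p
  induction p with
  | nil => exact fun hx => ⟨hx, Reachable.refl _⟩
  | @cons a b c h q ih =>
    intro hx
    have hz : b ∈ W := hW hx h
    obtain ⟨hy, hr⟩ := ih hz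
    refine ⟨hy, Reachable.trans (SimpleGraph.Adj.reachable ?_) hr⟩
    exact h

lemma reach_mem {H : SimpleGraph V} {W : Set V}
    (hW : ∀ ⦃x y⦄, x ∈ W → H.Adj x y → y ∈ W) {x y : V}
    (h : H.Reachable x y) (hx : x ∈ W) : y ∈ W := by
  obtain ⟨p⟩ := h
  exact (walk_reach hW p hx).1

lemma kcomp_closed {H : SimpleGraph V} [DecidableEq H.ConnectedComponent] {W : Finset V}
    (hW : ∀ ⦃x y⦄, x ∈ (W : Set V) → H.Adj x y → y ∈ (W : Set V)) :
    Nat.card (H.induce (W : Set V)).ConnectedComponent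
      = (W.image H.connectedComponentMk).card := by
  classical
  set T := W.image H.connectedComponentMk with hT
  have hf : ∀ (x y : (W : Set V)) (p : (H.induce (W : Set V)).Walk x y), p.IsPath →
      (⟨H.connectedComponentMk x.1, Finset.mem_image.mpr ⟨x.1, x.2, rfl⟩⟩ : {c // c ∈ T})
      = ⟨H.connectedComponentMk y.1, Finset.mem_image.mpr ⟨y.1, y.2, rfl⟩⟩ := by
    intro x y p _
    refine Subtype.ext (ConnectedComponent.sound ?_)
    exact (p.map (SimpleGraph.Hom.comap Subtype.val H)).reachable
  set f : (H.induce (W : Set V)).ConnectedComponent → {c // c ∈ T} :=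
    ConnectedComponent.lift
      (fun x => ⟨H.connectedComponentMk x.1, Finset.mem_image.mpr ⟨x.1, x.2, rfl⟩⟩) hf with hfdef
  have hbij : Function.Bijective f := by
    constructor
    · intro c d hcd
      obtain ⟨⟨x, hx⟩, rfl⟩ := c.exists_rep
      obtain ⟨⟨y, hy⟩, rfl⟩ := d.exists_rep
      have : H.connectedComponentMk x = H.connectedComponentMk y :=
        congrArg Subtype.val hcd
      have hreach : H.Reachable x y := ConnectedComponent.exact this
      obtain ⟨p⟩ := hreach
      obtain ⟨hy', hr⟩ := walk_reach hW p hx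
      exact ConnectedComponent.sound hr
    · rintro ⟨c, hc⟩
      obtain ⟨x, hx, rfl⟩ := Finset.mem_image.mp hc
      exact ⟨(H.induce (W : Set V)).connectedComponentMk ⟨x, hx⟩, rfl⟩
  rw [Nat.card_eq_of_bijective f hbij]
  simp [Nat.card_eq_finsetCard]

lemma closed_of_cond (G : SimpleGraph V) [DecidableRel G.Adj] {A : Finset (Sym2 V)}
    {U : Finset V}
    (hcl : ∀ e ∈ A, (∀ x ∈ e, x ∈ U) ∨ (∀ x ∈ e, x ∉ U)) :
    ∀ ⦃x y⦄, x ∈ (U : Set V) → (fromEdgeSet (A : Set (Sym2 V))).Adj x y →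
      y ∈ (U : Set V) := by
  intro x y hx hadj
  rw [SimpleGraph.fromEdgeSet_adj] at hadj
  obtain ⟨hmem, hne⟩ := hadj
  simp only [Finset.mem_coe] at hmem hx ⊢
  rcases hcl _ hmem with h | h
  · exact h y (Sym2.mem_mk_right x y)
  · exact absurd hx (h x (Sym2.mem_mk_left x y))

lemma kcomp_inter (G : SimpleGraph V) [DecidableRel G.Adj] {A : Finset (Sym2 V)}
    (hA : A ⊆ G.edgeFinset) {U : Finset V}
    [DecidableEq (fromEdgeSet (A : Set (Sym2 V))).ConnectedComponent]
    (hcl : ∀ e ∈ A, (∀ x ∈ e, x ∈ U) ∨ (∀ x ∈ e, x ∉ U)) :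
    kcomp U (A ∩ edgesWithin G U)
      = (U.image (fromEdgeSet (A : Set (Sym2 V))).connectedComponentMk).card := by
  classical
  have hgr : (fromEdgeSet ((A ∩ edgesWithin G U : Finset (Sym2 V)) : Set (Sym2 V))).induce
      (U : Set V) = (fromEdgeSet (A : Set (Sym2 V))).induce (U : Set V) := by
    ext ⟨x, hx⟩ ⟨y, hy⟩
    simp only [SimpleGraph.comap_adj, Function.Embedding.coe_subtype,
      SimpleGraph.fromEdgeSet_adj, Finset.mem_coe, Finset.mem_inter]
    constructor
    · rintro ⟨⟨h1, _⟩, hne⟩; exact ⟨h1, hne⟩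
    · rintro ⟨h1, hne⟩
      refine ⟨⟨h1, ?_⟩, hne⟩
      refine Finset.mem_filter.mpr ⟨hA h1, ?_⟩
      intro z hz
      rcases Sym2.mem_iff.mp hz with rfl | rfl
      · exact hx
      · exact hy
  unfold kcomp
  rw [hgr]
  exact kcomp_closed (closed_of_cond G hcl)

lemma core {R : Type*} [CommRing R] (G : SimpleGraph V) [DecidableRel G.Adj]
    (q1 q2 : R) (i : V) {A : Finset (Sym2 V)} (hA : A ⊆ G.edgeFinset) :
    (∑ W ∈ univ.filter (fun W : Finset V => i ∈ W ∧
        ∀ e ∈ A, e ∈ edgesWithin G W ∨ e ∈ edgesWithin G (univ \ W)),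
      q1 ^ (kcomp W (A ∩ edgesWithin G W) - 1)
        * q2 ^ kcomp (univ \ W) (A ∩ edgesWithin G (univ \ W)))
    = (q1 + q2) ^ (kcomp univ A - 1) := by
  classical
  set H := fromEdgeSet (A : Set (Sym2 V)) with hH
  haveI : Finite H.ConnectedComponent :=
    Finite.of_surjective H.connectedComponentMk Quot.mk_surjective
  haveI : Fintype H.ConnectedComponent := Fintype.ofFinite _
  set mk : V → H.ConnectedComponent := H.connectedComponentMk with hmk
  set N := Fintype.card H.ConnectedComponent with hN
  -- pointwise edge condition
  have hcond : ∀ (W : Finset V), ∀ e ∈ A, (e ∈ edgesWithin G W ↔ ∀ x ∈ e, x ∈ W) := by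
    intro W e he
    simp [edgesWithin, Finset.mem_filter, hA he]
  have hcondc : ∀ (W : Finset V), ∀ e ∈ A,
      (e ∈ edgesWithin G (univ \ W) ↔ ∀ x ∈ e, x ∉ W) := by
    intro W e he
    simp [edgesWithin, Finset.mem_filter, hA he]
  -- adjacency for edges of A
  have hadjA : ∀ e ∈ A, ∀ a b : V, e = s(a, b) → mk a = mk b := by
    intro e he a b hab
    subst hab
    by_cases hab : a = b
    · rw [hab]
    · exact ConnectedComponent.connectedComponentMk_eq_of_adj
        ((SimpleGraph.fromEdgeSet_adj ..).mpr ⟨he, hab⟩)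
  -- closedness from the condition
  have hclosed : ∀ (W : Finset V),
      (∀ e ∈ A, e ∈ edgesWithin G W ∨ e ∈ edgesWithin G (univ \ W)) →
      (∀ e ∈ A, (∀ x ∈ e, x ∈ W) ∨ (∀ x ∈ e, x ∉ W)) := by
    intro W hW e he
    rcases hW e he with h | h
    · exact Or.inl ((hcond W e he).mp h)
    · exact Or.inr ((hcondc W e he).mp h)
  have hclosedc : ∀ (W : Finset V),
      (∀ e ∈ A, (∀ x ∈ e, x ∈ W) ∨ (∀ x ∈ e, x ∉ W)) →
      (∀ e ∈ A, (∀ x ∈ e, x ∈ univ \ W) ∨ (∀ x ∈ e, x ∉ univ \ W)) := by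
    intro W hW e he
    rcases hW e he with h | h
    · exact Or.inr (fun x hx => by simp [h x hx])
    · exact Or.inl (fun x hx => by simp [h x hx])
  have hN1 : kcomp univ A = N := by
    have h0 : kcomp univ A = (Finset.univ.image mk).card :=
      kcomp_closed (by intro x y _ _; simp)
    have hsurj : Function.Surjective mk := fun c => c.exists_rep
    rw [h0, Finset.image_univ_of_surjective hsurj, Finset.card_univ, hN]
  rw [hN1]
  -- first bijection : W ↦ image of components
  have step1 : (∑ W ∈ univ.filter (fun W : Finset V => i ∈ W ∧
        ∀ e ∈ A, e ∈ edgesWithin G W ∨ e ∈ edgesWithin G (univ \ W)),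
      q1 ^ (kcomp W (A ∩ edgesWithin G W) - 1)
        * q2 ^ kcomp (univ \ W) (A ∩ edgesWithin G (univ \ W)))
      = ∑ T ∈ univ.filter (fun T : Finset H.ConnectedComponent => mk i ∈ T),
          q1 ^ (T.card - 1) * q2 ^ (N - T.card) := by
    refine Finset.sum_nbij' (i := fun W => W.image mk)
      (j := fun T => univ.filter (fun x => mk x ∈ T)) ?_ ?_ ?_ ?_ ?_
    · intro W hW
      simp only [Finset.mem_filter, Finset.mem_univ, true_and] at hW ⊢
      exact Finset.mem_image.mpr ⟨i, hW.1, rfl⟩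
    · intro T hT
      simp only [Finset.mem_filter, Finset.mem_univ, true_and] at hT ⊢
      refine ⟨hT, ?_⟩
      intro e he
      induction e using Sym2.ind with
      | _ a b =>
        have hab : mk a = mk b := hadjA _ he a b rfl
        by_cases hmkT : mk a ∈ T
        · refine Or.inl ((hcond _ _ he).mpr ?_)
          intro z hz
          rcases Sym2.mem_iff.mp hz with rfl | rfl
          · exact Finset.mem_filter.mpr ⟨Finset.mem_univ z, hmkT⟩
          · exact Finset.mem_filter.mpr ⟨Finset.mem_univ z, hab ▸ hmkT⟩
        · refine Or.inr ((hcondc _ _ he).mpr ?_)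
          intro z hz hzW
          have := (Finset.mem_filter.mp hzW).2
          rcases Sym2.mem_iff.mp hz with rfl | rfl
          · exact hmkT this
          · exact hmkT (hab ▸ this)
    · intro W hW
      simp only [Finset.mem_filter, Finset.mem_univ, true_and] at hW
      have hcl := closed_of_cond (A := A) (U := W) G (hclosed W hW.2)
      ext x
      simp only [Finset.mem_filter, Finset.mem_univ, true_and, Finset.mem_image]
      constructor
      · rintro ⟨y, hy, hxy⟩
        have : H.Reachable y x := ConnectedComponent.exact hxy
        exact reach_mem hcl this hy
      · intro hx; exact ⟨x, hx, rfl⟩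
    · intro T hT
      ext c
      simp only [Finset.mem_image, Finset.mem_filter, Finset.mem_univ, true_and]
      constructor
      · rintro ⟨x, hx, rfl⟩; exact hx
      · intro hc
        obtain ⟨x, rfl⟩ := Quot.exists_rep c
        exact ⟨x, hc, rfl⟩
    · intro W hW
      simp only [Finset.mem_filter, Finset.mem_univ, true_and] at hW
      have hclW := hclosed W hW.2
      have hcl := closed_of_cond (A := A) (U := W) G hclW
      have h1 : kcomp W (A ∩ edgesWithin G W) = (W.image mk).card :=
        kcomp_inter G hA hclW
      have himg : (univ \ W).image mk = univ \ W.image mk := by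
        ext c
        simp only [Finset.mem_image, Finset.mem_sdiff, Finset.mem_univ, true_and]
        constructor
        · rintro ⟨x, hx, rfl⟩
          rintro hmem
          obtain ⟨y, hy, hxy⟩ := hmem
          exact hx (reach_mem hcl (ConnectedComponent.exact hxy) hy)
        · intro hc
          obtain ⟨x, rfl⟩ := Quot.exists_rep c
          refine ⟨x, ?_, rfl⟩
          intro hxW
          exact hc ⟨x, hxW, rfl⟩
      have h2 : kcomp (univ \ W) (A ∩ edgesWithin G (univ \ W))
          = N - (W.image mk).card := by
        rw [kcomp_inter G hA (hclosedc W hclW), himg, Finset.card_sdiff_of_subset (Finset.subset_univ _),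
          Finset.card_univ]
      rw [h1, h2]
  rw [step1]
  -- second bijection : T ↦ T.erase (mk i)
  have step2 : (∑ T ∈ univ.filter (fun T : Finset H.ConnectedComponent => mk i ∈ T),
        q1 ^ (T.card - 1) * q2 ^ (N - T.card))
      = ∑ S ∈ ((univ : Finset H.ConnectedComponent).erase (mk i)).powerset,
          q1 ^ S.card * q2 ^ (((univ : Finset H.ConnectedComponent).erase (mk i)).card - S.card) := by
    refine Finset.sum_nbij' (i := fun T => T.erase (mk i)) (j := fun S => insert (mk i) S)
      ?_ ?_ ?_ ?_ ?_
    · intro T hT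
      exact Finset.mem_powerset.mpr (Finset.erase_subset_erase _ (Finset.subset_univ T))
    · intro S hS
      simp only [Finset.mem_filter, Finset.mem_univ, true_and]
      exact Finset.mem_insert_self _ _
    · intro T hT
      simp only [Finset.mem_filter, Finset.mem_univ, true_and] at hT
      exact Finset.insert_erase hT
    · intro S hS
      have : mk i ∉ S := fun h =>
        (Finset.mem_erase.mp (Finset.mem_powerset.mp hS h)).1 rfl
      exact Finset.erase_insert this
    · intro T hT
      simp only [Finset.mem_filter, Finset.mem_univ, true_and] at hT
      have hcard : (T.erase (mk i)).card = T.card - 1 := Finset.card_erase_of_mem hT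
      have hcard2 : ((univ : Finset H.ConnectedComponent).erase (mk i)).card = N - 1 := by
        rw [Finset.card_erase_of_mem (Finset.mem_univ _), Finset.card_univ]
      have hT1 : 1 ≤ T.card := Finset.card_pos.mpr ⟨mk i, hT⟩
      have h3 : N - 1 - (T.card - 1) = N - T.card := by
        rw [Nat.sub_sub]
        congr 1
        omega
      rw [hcard, hcard2, h3]
  rw [step2]
  have hcard2 : ((univ : Finset H.ConnectedComponent).erase (mk i)).card = N - 1 := by
    rw [Finset.card_erase_of_mem (Finset.mem_univ _), Finset.card_univ, hN]
  have hterm : ∀ S ∈ ((univ : Finset H.ConnectedComponent).erase (mk i)).powerset,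
      q1 ^ S.card * q2 ^ (((univ : Finset H.ConnectedComponent).erase (mk i)).card - S.card)
      = (∏ _x ∈ S, q1) * ∏ _x ∈ ((univ : Finset H.ConnectedComponent).erase (mk i)) \ S, q2 := by
    intro S hS
    rw [Finset.prod_const, Finset.prod_const,
      Finset.card_sdiff_of_subset (Finset.mem_powerset.mp hS)]
  rw [Finset.sum_congr rfl hterm, ← Finset.prod_add, Finset.prod_const, hcard2]

end aux

theorem stmt13 {V : Type*} [Fintype V] [DecidableEq V] {R : Type*} [CommRing R]
    (G : SimpleGraph V) [DecidableRel G.Adj] (v : Sym2 V → R) (q1 q2 : R) (i : V) :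
    ZhatMv G Finset.univ (q1 + q2) v
      = ∑ W ∈ Finset.univ.filter (fun W : Finset V => i ∈ W),
          ZhatMv G W q1 v * Zmv G (Finset.univ \ W) q2 v := by
  classical
  have key : ∀ W : Finset V,
      ZhatMv G W q1 v * Zmv G (Finset.univ \ W) q2 v
      = ∑ A ∈ (edgesWithin G Finset.univ).powerset.filter
          (fun A => ∀ e ∈ A, e ∈ edgesWithin G W ∨ e ∈ edgesWithin G (univ \ W)),
          q1 ^ (kcomp W (A ∩ edgesWithin G W) - 1)
            * q2 ^ kcomp (univ \ W) (A ∩ edgesWithin G (univ \ W)) * ∏ e ∈ A, v e := by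
    intro W
    have hdisj := edgesWithin_disjoint G W
    unfold ZhatMv Zmv
    rw [Finset.sum_mul_sum]
    rw [← Finset.sum_product']
    refine Finset.sum_nbij' (i := fun p => p.1 ∪ p.2)
      (j := fun A => (A ∩ edgesWithin G W, A ∩ edgesWithin G (univ \ W))) ?_ ?_ ?_ ?_ ?_
    · rintro ⟨p1, p2⟩ hp
      simp only [Finset.mem_product, Finset.mem_powerset] at hp
      simp only [Finset.mem_filter, Finset.mem_powerset]
      constructor
      · refine Finset.union_subset ?_ ?_ <;> intro e he
        · have := hp.1 he
          simp only [edgesWithin, Finset.mem_filter] at this ⊢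
          exact ⟨this.1, fun x _ => Finset.mem_univ x⟩
        · have := hp.2 he
          simp only [edgesWithin, Finset.mem_filter] at this ⊢
          exact ⟨this.1, fun x _ => Finset.mem_univ x⟩
      · intro e he
        rcases Finset.mem_union.mp he with h | h
        · exact Or.inl (hp.1 h)
        · exact Or.inr (hp.2 h)
    · intro A hA
      simp only [Finset.mem_product, Finset.mem_powerset]
      exact ⟨Finset.inter_subset_right, Finset.inter_subset_right⟩
    · rintro ⟨p1, p2⟩ hp
      simp only [Finset.mem_product, Finset.mem_powerset] at hp
      have h1 : (p1 ∪ p2) ∩ edgesWithin G W = p1 := by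
        rw [Finset.union_inter_distrib_right,
          Finset.inter_eq_left.mpr hp.1,
          Finset.disjoint_iff_inter_eq_empty.mp
            (Finset.disjoint_of_subset_left hp.2 hdisj.symm), Finset.union_empty]
      have h2 : (p1 ∪ p2) ∩ edgesWithin G (univ \ W) = p2 := by
        rw [Finset.union_inter_distrib_right,
          Finset.inter_eq_left.mpr hp.2,
          Finset.disjoint_iff_inter_eq_empty.mp
            (Finset.disjoint_of_subset_left hp.1 hdisj), Finset.empty_union]
      simp [h1, h2]
    · intro A hA
      simp only [Finset.mem_filter, Finset.mem_powerset] at hA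
      ext e
      simp only [Finset.mem_union, Finset.mem_inter]
      constructor
      · rintro (⟨h, _⟩ | ⟨h, _⟩) <;> exact h
      · intro he
        rcases hA.2 e he with h | h
        · exact Or.inl ⟨he, h⟩
        · exact Or.inr ⟨he, h⟩
    · rintro ⟨p1, p2⟩ hp
      simp only [Finset.mem_product, Finset.mem_powerset] at hp
      have h1 : (p1 ∪ p2) ∩ edgesWithin G W = p1 := by
        rw [Finset.union_inter_distrib_right,
          Finset.inter_eq_left.mpr hp.1,
          Finset.disjoint_iff_inter_eq_empty.mp
            (Finset.disjoint_of_subset_left hp.2 hdisj.symm), Finset.union_empty]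
      have h2 : (p1 ∪ p2) ∩ edgesWithin G (univ \ W) = p2 := by
        rw [Finset.union_inter_distrib_right,
          Finset.inter_eq_left.mpr hp.2,
          Finset.disjoint_iff_inter_eq_empty.mp
            (Finset.disjoint_of_subset_left hp.1 hdisj), Finset.empty_union]
      have hpd : Disjoint p1 p2 :=
        Finset.disjoint_of_subset_left hp.1 (Finset.disjoint_of_subset_right hp.2 hdisj)
      rw [h1, h2, Finset.prod_union hpd]
      ring
  rw [Finset.sum_congr rfl (fun W _ => key W)]
  rw [Finset.sum_comm' (t' := (edgesWithin G Finset.univ).powerset)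
    (s' := fun A => univ.filter (fun W : Finset V => i ∈ W ∧
      ∀ e ∈ A, e ∈ edgesWithin G W ∨ e ∈ edgesWithin G (univ \ W)))
    (by
      intro W A
      simp only [Finset.mem_filter, Finset.mem_univ, true_and, Finset.mem_powerset]
      tauto)]
  unfold ZhatMv
  refine Finset.sum_congr rfl ?_
  intro A hA
  have hAE : A ⊆ G.edgeFinset := by
    intro e he
    have := Finset.mem_powerset.mp hA he
    exact (Finset.mem_filter.mp this).1
  rw [← Finset.sum_mul, core G q1 q2 i hAE]
end

section
/- Let G = (V,E) be a finite simple graph, let R be a commutative ring, let v : E → R be edge weights, let q ∈ R, and let i, j ∈ V with i ≠ j. Then Z_G(q, v) = Σ_{W ⊆ V, i ∈ W, j ∉ W} [ q - 1 + ∏_{e ∈ E(W,j)} (1 + v_e) ] · C_{G[W]}(v) · Z_{G[V∖W]}(q, v), where E(W,j) denotes the set of edges of G with one endpoint in W and the other endpoint equal to j. -/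
open Finset SimpleGraph

/-- The edges of `G` with one endpoint in `W` and the other endpoint equal to `j`. -/
def edgesTo {V : Type*} [Fintype V] [DecidableEq V]
    (G : SimpleGraph V) [DecidableRel G.Adj] (W : Finset V) (j : V) : Finset (Sym2 V) :=
  G.edgeFinset.filter (fun e => ∃ x ∈ W, e = s(x, j))

namespace Stmt15Aux

variable {V : Type*} [Fintype V] [DecidableEq V]

/-- Shorthand for the graph with edge set `A`. -/
abbrev GA (A : Finset (Sym2 V)) : SimpleGraph V := fromEdgeSet (A : Set (Sym2 V))

theorem reach_const {α : Type*} {β : Sort*} {H : SimpleGraph α} {f : α → β}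
    (hf : ∀ a b, H.Adj a b → f a = f b) {a b : α} (h : H.Reachable a b) : f a = f b := by
  obtain ⟨p⟩ := h
  induction p with
  | nil => rfl
  | cons h _ ih => exact (hf _ _ h).trans ih

/-- Lift a function constant on adjacent vertices to connected components. -/
def ccLiftAdj {α : Type*} {β : Sort*} (H : SimpleGraph α) (f : α → β)
    (hf : ∀ a b, H.Adj a b → f a = f b) : H.ConnectedComponent → β :=
  Quot.lift f fun _ _ h => reach_const hf h

@[simp] theorem ccLiftAdj_mk {α : Type*} {β : Sort*} (H : SimpleGraph α) (f : α → β)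
    (hf : ∀ a b, H.Adj a b → f a = f b) (a : α) :
    ccLiftAdj H f hf (H.connectedComponentMk a) = f a := rfl

theorem card_cc_eq {α τ : Type*} (H : SimpleGraph α) (f : α → τ)
    (hf : ∀ a b, H.Adj a b → f a = f b) (g : τ → H.ConnectedComponent)
    (h₁ : ∀ a, g (f a) = H.connectedComponentMk a)
    (h₂ : ∀ t, ccLiftAdj H f hf (g t) = t) :
    Nat.card H.ConnectedComponent = Nat.card τ :=
  Nat.card_congr ⟨ccLiftAdj H f hf, g,
    fun c => ConnectedComponent.ind (fun a => by rw [ccLiftAdj_mk, h₁]) c, h₂⟩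

theorem walk_restrict {A A₁ : Finset (Sym2 V)} {S : Set V}
    (h : ∀ e ∈ A, ∀ x ∈ e, x ∈ S → e ∈ A₁ ∧ ∀ y ∈ e, y ∈ S)
    {x y : V} (p : (GA A).Walk x y) (hx : x ∈ S) :
    y ∈ S ∧ (GA A₁).Reachable x y := by
  revert hx
  induction p with
  | nil => exact fun hx => ⟨hx, Reachable.refl _⟩
  | @cons a b c hadj p ih =>
    intro hx
    rw [fromEdgeSet_adj] at hadj
    obtain ⟨he, hne⟩ := hadj
    have hmem : s(a, b) ∈ A := he
    obtain ⟨he₁, hS⟩ := h _ hmem a (Sym2.mem_mk_left a b) hx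
    have hb : b ∈ S := hS b (Sym2.mem_mk_right a b)
    obtain ⟨hy, hr₁⟩ := ih hb
    refine ⟨hy, (SimpleGraph.Adj.reachable ?_).trans hr₁⟩
    rw [fromEdgeSet_adj]
    exact ⟨he₁, hne⟩

theorem reach_restrict {A A₁ : Finset (Sym2 V)} {S : Set V}
    (h : ∀ e ∈ A, ∀ x ∈ e, x ∈ S → e ∈ A₁ ∧ ∀ y ∈ e, y ∈ S)
    {x y : V} (hr : (GA A).Reachable x y) (hx : x ∈ S) :
    y ∈ S ∧ (GA A₁).Reachable x y := by
  obtain ⟨p⟩ := hr; exact walk_restrict h p hx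

theorem reach_closed {A : Finset (Sym2 V)} {S : Set V}
    (h : ∀ e ∈ A, ∀ x ∈ e, x ∈ S) {x y : V}
    (hr : (GA A).Reachable x y) (hx : x ∈ S) : y ∈ S :=
  (reach_restrict (A₁ := A) (fun e he z hz _ => ⟨he, fun w hw => h e he w hw⟩) hr hx).1

theorem reach_induce {A : Finset (Sym2 V)} {S : Set V}
    (h : ∀ e ∈ A, ∀ x ∈ e, x ∈ S) {x y : V} (p : (GA A).Walk x y)
    (hx : x ∈ S) (hy : y ∈ S) :
    ((GA A).induce S).Reachable ⟨x, hx⟩ ⟨y, hy⟩ := by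
  revert hx hy
  induction p with
  | nil => intro hx hy; exact Reachable.refl _
  | @cons a b c hadj p ih =>
    intro hx hy
    have hb : b ∈ S := by
      rw [fromEdgeSet_adj] at hadj
      exact h _ hadj.1 b (Sym2.mem_mk_right a b)
    exact (SimpleGraph.Adj.reachable
      (show ((GA A).induce S).Adj ⟨a, hx⟩ ⟨b, hb⟩ from hadj)).trans (ih hb hy)

theorem reach_of_induce {A : Finset (Sym2 V)} {S : Set V} {x y : S}
    (hr : ((GA A).induce S).Reachable x y) : (GA A).Reachable x y :=
  hr.map (SimpleGraph.Embedding.induce S).toHom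

theorem kcomp_eq_one_iff {G : SimpleGraph V} [DecidableRel G.Adj] {W : Finset V}
    {A₁ : Finset (Sym2 V)} (hA : A₁ ⊆ edgesWithin G W) {i : V} (hi : i ∈ W) :
    kcomp W A₁ = 1 ↔ ∀ x ∈ W, (GA A₁).Reachable i x := by
  have hconf : ∀ e ∈ A₁, ∀ x ∈ e, x ∈ (W : Set V) := fun e he x hx =>
    Finset.mem_coe.mpr ((Finset.mem_filter.mp (hA he)).2 x hx)
  rw [kcomp, Nat.card_eq_one_iff_unique]
  constructor
  · rintro ⟨hs, -⟩ x hx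
    have hmem : (i : V) ∈ (W : Set V) := hi
    have hmem' : (x : V) ∈ (W : Set V) := hx
    have := @Subsingleton.elim _ hs
      (((GA A₁).induce (W : Set V)).connectedComponentMk ⟨i, hmem⟩)
      (((GA A₁).induce (W : Set V)).connectedComponentMk ⟨x, hmem'⟩)
    exact reach_of_induce (ConnectedComponent.exact this)
  · intro h
    refine ⟨⟨fun c d => ?_⟩, ⟨((GA A₁).induce (W : Set V)).connectedComponentMk
      ⟨i, Finset.mem_coe.mpr hi⟩⟩⟩
    refine ConnectedComponent.ind₂ (fun a b => ?_) c d
    apply ConnectedComponent.sound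
    have ha : (GA A₁).Reachable i a := h a (Finset.mem_coe.mp a.2)
    have hb : (GA A₁).Reachable i b := h b (Finset.mem_coe.mp b.2)
    obtain ⟨p⟩ := ha.symm.trans hb
    exact reach_induce hconf p a.2 b.2

theorem kcomp_univ_eq (A : Finset (Sym2 V)) :
    kcomp (univ : Finset V) A = Nat.card (GA A).ConnectedComponent := by
  rw [kcomp]
  exact card_cc_eq _ (fun x => (GA A).connectedComponentMk ↑x)
    (fun a b hab => ConnectedComponent.sound
      (SimpleGraph.Adj.reachable (show (GA A).Adj ↑a ↑b from hab)))
    (ccLiftAdj _ (fun x => ((GA A).induce ((univ : Finset V) : Set V)).connectedComponentMk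
        ⟨x, by simp⟩)
      (fun a b hab => ConnectedComponent.sound
        (SimpleGraph.Adj.reachable
          (show ((GA A).induce ((univ : Finset V) : Set V)).Adj ⟨a, by simp⟩ ⟨b, by simp⟩
            from hab))))
    (fun a => congrArg _ (Subtype.ext rfl))
    (fun t => ConnectedComponent.ind (fun x => rfl) t)

end Stmt15Aux
namespace Stmt15Aux

variable {V : Type*} [Fintype V] [DecidableEq V]

section Split

variable {G : SimpleGraph V} [DecidableRel G.Adj] {W : Finset V} {i j : V}
  {A₁ B A₂ : Finset (Sym2 V)}

theorem mem_sdiff_coe {x : V} (hx : x ∉ W) : x ∈ ((univ \ W : Finset V) : Set V) := by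
  simp [hx]

theorem kcomp_split_nonempty (hi : i ∈ W) (hj : j ∉ W)
    (hA₁ : A₁ ⊆ edgesWithin G W) (hB : B ⊆ edgesTo G W j)
    (hA₂ : A₂ ⊆ edgesWithin G (univ \ W)) (hk : kcomp W A₁ = 1) (hBne : B.Nonempty) :
    kcomp univ (A₁ ∪ B ∪ A₂) = kcomp (univ \ W) A₂ := by
  set U : Finset (Sym2 V) := A₁ ∪ B ∪ A₂ with hU
  set K : SimpleGraph ((univ \ W : Finset V) : Set V) :=
    (GA A₂).induce ((univ \ W : Finset V) : Set V) with hK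
  have hsubA₁ : A₁ ⊆ U := (subset_union_left).trans subset_union_left
  have hsubB : B ⊆ U := (subset_union_right).trans subset_union_left
  have hsubA₂ : A₂ ⊆ U := subset_union_right
  have hreach : ∀ x ∈ W, (GA U).Reachable i x := fun x hx =>
    Reachable.mono (fromEdgeSet_mono (Finset.coe_subset.mpr hsubA₁))
      ((kcomp_eq_one_iff hA₁ hi).mp hk x hx)
  obtain ⟨e₀, he₀⟩ := hBne
  obtain ⟨w₀, hw₀, he₀'⟩ := (Finset.mem_filter.mp (hB he₀)).2
  have hadj₀ : (GA U).Adj w₀ j := by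
    rw [fromEdgeSet_adj]
    exact ⟨Finset.mem_coe.mpr (he₀' ▸ hsubB he₀), fun h => hj (h ▸ hw₀)⟩
  have hreachj : ∀ x ∈ W, (GA U).Reachable x j := fun x hx =>
    (hreach x hx).symm.trans ((hreach w₀ hw₀).trans hadj₀.reachable)
  have hjm : (j : V) ∈ ((univ \ W : Finset V) : Set V) := mem_sdiff_coe hj
  refine (kcomp_univ_eq U).trans ?_
  refine card_cc_eq (GA U)
    (fun x => if hx : x ∈ W then K.connectedComponentMk ⟨j, hjm⟩
      else K.connectedComponentMk ⟨x, mem_sdiff_coe hx⟩)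
    ?_
    (ccLiftAdj K (fun x => (GA U).connectedComponentMk ↑x) ?_)
    ?_ ?_
  · -- constant on adjacency
    intro a b hab
    rw [fromEdgeSet_adj] at hab
    obtain ⟨he, hne⟩ := hab
    have he' : s(a, b) ∈ U := he
    rcases Finset.mem_union.mp he' with h' | h2
    · rcases Finset.mem_union.mp h' with h1 | hb'
      · have hall := (Finset.mem_filter.mp (hA₁ h1)).2
        rw [dif_pos (hall a (Sym2.mem_mk_left a b)), dif_pos (hall b (Sym2.mem_mk_right a b))]
      · obtain ⟨w, hw, hsw⟩ := (Finset.mem_filter.mp (hB hb')).2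
        rcases Sym2.eq_iff.mp hsw with ⟨rfl, rfl⟩ | ⟨rfl, rfl⟩
        · rw [dif_pos hw, dif_neg hj]
        · rw [dif_neg hj, dif_pos hw]
    · have hall := (Finset.mem_filter.mp (hA₂ h2)).2
      have ha : a ∉ W := (Finset.mem_sdiff.mp (hall a (Sym2.mem_mk_left a b))).2
      have hb : b ∉ W := (Finset.mem_sdiff.mp (hall b (Sym2.mem_mk_right a b))).2
      rw [dif_neg ha, dif_neg hb]
      refine ConnectedComponent.sound (SimpleGraph.Adj.reachable ?_)
      show (GA A₂).Adj a b
      rw [fromEdgeSet_adj]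
      exact ⟨Finset.mem_coe.mpr h2, hne⟩
  · -- K-adjacency goes to U reachability
    intro a b hab
    exact ConnectedComponent.sound
      (Reachable.mono (fromEdgeSet_mono (Finset.coe_subset.mpr hsubA₂))
        (SimpleGraph.Adj.reachable (show (GA A₂).Adj ↑a ↑b from hab)))
  · -- h₁
    intro a
    by_cases ha : a ∈ W
    · rw [dif_pos ha, ccLiftAdj_mk]
      exact ConnectedComponent.sound (hreachj a ha).symm
    · rw [dif_neg ha, ccLiftAdj_mk]
  · -- h₂
    intro t
    refine ConnectedComponent.ind (fun x => ?_) t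
    have hx : (↑x : V) ∉ W := by
      have := x.2
      simp only [Finset.coe_sdiff, coe_univ, Set.mem_diff, Finset.mem_coe] at this
      exact this.2
    rw [ccLiftAdj_mk, ccLiftAdj_mk]
    beta_reduce
    rw [dif_neg hx]

theorem kcomp_split_empty (hi : i ∈ W) (hj : j ∉ W)
    (hA₁ : A₁ ⊆ edgesWithin G W)
    (hA₂ : A₂ ⊆ edgesWithin G (univ \ W)) (hk : kcomp W A₁ = 1) :
    kcomp univ (A₁ ∪ A₂) = kcomp (univ \ W) A₂ + 1 := by
  set U : Finset (Sym2 V) := A₁ ∪ A₂ with hU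
  set K : SimpleGraph ((univ \ W : Finset V) : Set V) :=
    (GA A₂).induce ((univ \ W : Finset V) : Set V) with hK
  have hsubA₁ : A₁ ⊆ U := subset_union_left
  have hsubA₂ : A₂ ⊆ U := subset_union_right
  have hreach : ∀ x ∈ W, (GA U).Reachable i x := fun x hx =>
    Reachable.mono (fromEdgeSet_mono (Finset.coe_subset.mpr hsubA₁))
      ((kcomp_eq_one_iff hA₁ hi).mp hk x hx)
  haveI : Finite K.ConnectedComponent := inferInstanceAs (Finite (Quot K.Reachable))
  have hcard : Nat.card (GA U).ConnectedComponent = Nat.card (Option K.ConnectedComponent) := by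
    refine card_cc_eq (GA U)
      (fun x => if hx : x ∈ W then none
        else some (K.connectedComponentMk ⟨x, mem_sdiff_coe hx⟩))
      ?_
      (fun o => o.elim ((GA U).connectedComponentMk i)
        (ccLiftAdj K (fun x => (GA U).connectedComponentMk ↑x) ?_))
      ?_ ?_
    · intro a b hab
      rw [fromEdgeSet_adj] at hab
      obtain ⟨he, hne⟩ := hab
      have he' : s(a, b) ∈ U := he
      rcases Finset.mem_union.mp he' with h1 | h2
      · have hall := (Finset.mem_filter.mp (hA₁ h1)).2
        rw [dif_pos (hall a (Sym2.mem_mk_left a b)), dif_pos (hall b (Sym2.mem_mk_right a b))]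
      · have hall := (Finset.mem_filter.mp (hA₂ h2)).2
        have ha : a ∉ W := (Finset.mem_sdiff.mp (hall a (Sym2.mem_mk_left a b))).2
        have hb : b ∉ W := (Finset.mem_sdiff.mp (hall b (Sym2.mem_mk_right a b))).2
        rw [dif_neg ha, dif_neg hb]
        refine congrArg some (ConnectedComponent.sound (SimpleGraph.Adj.reachable ?_))
        show (GA A₂).Adj a b
        rw [fromEdgeSet_adj]
        exact ⟨Finset.mem_coe.mpr h2, hne⟩
    · intro a b hab
      exact ConnectedComponent.sound
        (Reachable.mono (fromEdgeSet_mono (Finset.coe_subset.mpr hsubA₂))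
          (SimpleGraph.Adj.reachable (show (GA A₂).Adj ↑a ↑b from hab)))
    · intro a
      beta_reduce
      by_cases ha : a ∈ W
      · rw [dif_pos ha]
        exact ConnectedComponent.sound (hreach a ha)
      · rw [dif_neg ha]
        rfl
    · rintro (_ | t)
      · show (if hx : i ∈ W then none else _) = _
        rw [dif_pos hi]
      · refine ConnectedComponent.ind (fun x => ?_) t
        have hx : (↑x : V) ∉ W := by
          have := x.2
          simp only [Finset.coe_sdiff, coe_univ, Set.mem_diff, Finset.mem_coe] at this
          exact this.2
        show (if hx : (↑x : V) ∈ W then none else some (K.connectedComponentMk ⟨↑x, mem_sdiff_coe hx⟩)) = _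
        rw [dif_neg hx]
  rw [kcomp_univ_eq, hcard, Finite.card_option]
  rfl

end Split

end Stmt15Aux
namespace Stmt15Aux

variable {V : Type*} [Fintype V] [DecidableEq V]

/-- The component of `i` after deleting all edges incident to `j`. -/
noncomputable def compOf (i j : V) (A : Finset (Sym2 V)) : Finset V :=
  @Finset.filter V
    (fun x => (GA (A.filter (fun e => ¬ j ∈ e))).Reachable i x)
    (Classical.decPred _) Finset.univ

theorem mem_compOf {i j x : V} {A : Finset (Sym2 V)} :
    x ∈ compOf i j A ↔ (GA (A.filter (fun e => ¬ j ∈ e))).Reachable i x := by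
  unfold compOf
  rw [@Finset.mem_filter _ _ (Classical.decPred _)]
  exact and_iff_right (Finset.mem_univ x)

theorem mem_compOf_self {i j : V} {A : Finset (Sym2 V)} : i ∈ compOf i j A :=
  mem_compOf.mpr (Reachable.refl i)

theorem not_mem_compOf {i j : V} (hij : i ≠ j) {A : Finset (Sym2 V)} :
    j ∉ compOf i j A := by
  intro h
  have hr := mem_compOf.mp h
  have : j ∈ {x : V | x ≠ j} := by
    refine reach_closed (S := {x : V | x ≠ j}) ?_ hr hij
    intro e he x hx
    intro hxj
    exact (Finset.mem_filter.mp he).2 (hxj ▸ hx)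
  exact this rfl

theorem side_step {W : Finset V} {i j : V} {A : Finset (Sym2 V)}
    (hcomp : compOf i j A = W) {a b : V} (hab : s(a, b) ∈ A)
    (hjab : ¬ j ∈ s(a, b)) (ha : a ∈ W) : b ∈ W := by
  by_cases hne : a = b
  · exact hne ▸ ha
  have hadj : (GA (A.filter (fun e => ¬ j ∈ e))).Adj a b := by
    rw [fromEdgeSet_adj]
    exact ⟨Finset.mem_coe.mpr (Finset.mem_filter.mpr ⟨hab, hjab⟩), hne⟩
  have hA : a ∈ compOf i j A := hcomp ▸ ha
  rw [← hcomp]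
  exact mem_compOf.mpr ((mem_compOf.mp hA).trans hadj.reachable)

variable {G : SimpleGraph V} [DecidableRel G.Adj]

theorem edgesWithin_univ : edgesWithin G univ = G.edgeFinset :=
  Finset.filter_true_of_mem (fun e _ => fun x _ => Finset.mem_univ x)

theorem subset_decomp {W : Finset V} {i j : V} {A : Finset (Sym2 V)} (hij : i ≠ j)
    (hA : A ⊆ G.edgeFinset) (hcomp : compOf i j A = W) :
    A ⊆ edgesWithin G W ∪ edgesTo G W j ∪ edgesWithin G (univ \ W) := by
  have hjW : j ∉ W := hcomp ▸ not_mem_compOf hij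
  intro e he
  revert he
  refine Sym2.ind (fun a b he => ?_) e
  have hef : s(a, b) ∈ G.edgeFinset := hA he
  have hadj : G.Adj a b := by rwa [SimpleGraph.mem_edgeFinset, SimpleGraph.mem_edgeSet] at hef
  have hne : a ≠ b := hadj.ne
  by_cases ha : a ∈ W <;> by_cases hb : b ∈ W
  · refine Finset.mem_union_left _ (Finset.mem_union_left _ (Finset.mem_filter.mpr ⟨hef, ?_⟩))
    intro x hx
    rcases Sym2.mem_iff.mp hx with rfl | rfl <;> assumption
  · by_cases hbj : b = j
    · subst hbj
      exact Finset.mem_union_left _ (Finset.mem_union_right _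
        (Finset.mem_filter.mpr ⟨hef, ⟨a, ha, rfl⟩⟩))
    · exfalso
      refine hb (side_step hcomp he ?_ ha)
      intro hjmem
      rcases Sym2.mem_iff.mp hjmem with rfl | rfl
      · exact hjW ha
      · exact hbj rfl
  · by_cases haj : a = j
    · subst haj
      refine Finset.mem_union_left _ (Finset.mem_union_right _
        (Finset.mem_filter.mpr ⟨hef, ⟨b, hb, Sym2.eq_swap⟩⟩))
    · exfalso
      refine ha (side_step hcomp (Sym2.eq_swap (a := a) ▸ he) ?_ hb)
      intro hjmem
      rcases Sym2.mem_iff.mp hjmem with rfl | rfl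
      · exact hjW hb
      · exact haj rfl
  · refine Finset.mem_union_right _ (Finset.mem_filter.mpr ⟨hef, ?_⟩)
    intro x hx
    rcases Sym2.mem_iff.mp hx with rfl | rfl <;>
      exact Finset.mem_sdiff.mpr ⟨Finset.mem_univ _, by assumption⟩

theorem kcomp_inter_one {W : Finset V} {i j : V} {A : Finset (Sym2 V)} (hij : i ≠ j)
    (hA : A ⊆ G.edgeFinset) (hcomp : compOf i j A = W) :
    kcomp W (A ∩ edgesWithin G W) = 1 := by
  have hi : i ∈ W := hcomp ▸ mem_compOf_self
  have hjW : j ∉ W := hcomp ▸ not_mem_compOf hij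
  rw [kcomp_eq_one_iff Finset.inter_subset_right hi]
  intro x hx
  have hxr : (GA (A.filter (fun e => ¬ j ∈ e))).Reachable i x :=
    mem_compOf.mp (hcomp ▸ hx)
  have h : ∀ e ∈ A.filter (fun e => ¬ j ∈ e), ∀ y ∈ e, y ∈ (W : Set V) →
      e ∈ A ∩ edgesWithin G W ∧ ∀ z ∈ e, z ∈ (W : Set V) := by
    intro e he
    obtain ⟨heA, hje⟩ := Finset.mem_filter.mp he
    revert heA hje
    refine Sym2.ind (fun a b heA hje y hy hyW => ?_) e
    have hswap : s(b, a) ∈ A := by rw [Sym2.eq_swap]; exact heA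
    have hjswap : ¬ j ∈ s(b, a) := by rw [Sym2.eq_swap]; exact hje
    have habW : a ∈ W ∧ b ∈ W := by
      rcases Sym2.mem_iff.mp hy with h | h
      · have ha : a ∈ W := h ▸ Finset.mem_coe.mp hyW
        exact ⟨ha, side_step hcomp heA hje ha⟩
      · have hb : b ∈ W := h ▸ Finset.mem_coe.mp hyW
        exact ⟨side_step hcomp hswap hjswap hb, hb⟩
    have hallW : ∀ z ∈ s(a, b), z ∈ W := fun z hz => by
      rcases Sym2.mem_iff.mp hz with h | h
      · exact h ▸ habW.1
      · exact h ▸ habW.2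
    refine ⟨Finset.mem_inter.mpr ⟨heA, Finset.mem_filter.mpr ⟨hA heA, hallW⟩⟩,
      fun z hz => Finset.mem_coe.mpr (hallW z hz)⟩
  exact (reach_restrict h hxr (Finset.mem_coe.mpr hi)).2

theorem compOf_union {W : Finset V} {i j : V} {A₁ B A₂ : Finset (Sym2 V)}
    (hi : i ∈ W) (hj : j ∉ W)
    (hA₁ : A₁ ⊆ edgesWithin G W) (hB : B ⊆ edgesTo G W j)
    (hA₂ : A₂ ⊆ edgesWithin G (univ \ W)) (hk : kcomp W A₁ = 1) :
    compOf i j (A₁ ∪ B ∪ A₂) = W := by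
  have hA₁F : A₁ ⊆ (A₁ ∪ B ∪ A₂).filter (fun e => ¬ j ∈ e) := fun e he =>
    Finset.mem_filter.mpr ⟨Finset.mem_union_left _ (Finset.mem_union_left _ he),
      fun hje => hj ((Finset.mem_filter.mp (hA₁ he)).2 j hje)⟩
  ext x
  constructor
  · intro hx
    have hr := mem_compOf.mp hx
    have h : ∀ e ∈ (A₁ ∪ B ∪ A₂).filter (fun e => ¬ j ∈ e), ∀ y ∈ e, y ∈ (W : Set V) →
        e ∈ A₁ ∧ ∀ z ∈ e, z ∈ (W : Set V) := by
      intro e he y hy hyW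
      obtain ⟨heU, hje⟩ := Finset.mem_filter.mp he
      rcases Finset.mem_union.mp heU with h' | h2
      · rcases Finset.mem_union.mp h' with h1 | hb'
        · exact ⟨h1, fun z hz => Finset.mem_coe.mpr ((Finset.mem_filter.mp (hA₁ h1)).2 z hz)⟩
        · exfalso
          obtain ⟨w, hw, rfl⟩ := (Finset.mem_filter.mp (hB hb')).2
          exact hje (Sym2.mem_mk_right w j)
      · exfalso
        have := (Finset.mem_filter.mp (hA₂ h2)).2 y hy
        exact (Finset.mem_sdiff.mp this).2 (Finset.mem_coe.mp hyW)
    exact Finset.mem_coe.mp (reach_restrict h hr (Finset.mem_coe.mpr hi)).1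
  · intro hx
    exact mem_compOf.mpr (Reachable.mono (fromEdgeSet_mono (Finset.coe_subset.mpr hA₁F))
      ((kcomp_eq_one_iff hA₁ hi).mp hk x hx))

theorem disj₁₂ {W : Finset V} {j : V} (hj : j ∉ W) :
    Disjoint (edgesWithin G W) (edgesTo G W j) := by
  rw [Finset.disjoint_left]
  intro e h1 h2
  obtain ⟨w, hw, rfl⟩ := (Finset.mem_filter.mp h2).2
  exact hj ((Finset.mem_filter.mp h1).2 j (Sym2.mem_mk_right w j))

theorem disj₁₃ {W : Finset V} :
    Disjoint (edgesWithin G W) (edgesWithin G (univ \ W)) := by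
  rw [Finset.disjoint_left]
  intro e h1 h2
  revert h1 h2
  refine Sym2.ind (fun a b h1 h2 => ?_) e
  have ha : a ∈ W := (Finset.mem_filter.mp h1).2 a (Sym2.mem_mk_left a b)
  have ha' := (Finset.mem_filter.mp h2).2 a (Sym2.mem_mk_left a b)
  exact (Finset.mem_sdiff.mp ha').2 ha

theorem disj₂₃ {W : Finset V} {j : V} :
    Disjoint (edgesTo G W j) (edgesWithin G (univ \ W)) := by
  rw [Finset.disjoint_left]
  intro e h1 h2
  obtain ⟨w, hw, rfl⟩ := (Finset.mem_filter.mp h1).2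
  have := (Finset.mem_filter.mp h2).2 w (Sym2.mem_mk_left w j)
  exact (Finset.mem_sdiff.mp this).2 hw

theorem sum_powerset_prod {R : Type*} [CommRing R] (s : Finset (Sym2 V)) (v : Sym2 V → R) :
    ∑ B ∈ s.powerset, ∏ e ∈ B, v e = ∏ e ∈ s, (1 + v e) := by
  have : ∀ e ∈ s, (1 : R) + v e = v e + 1 := fun _ _ => add_comm 1 _
  rw [Finset.prod_congr rfl this, Finset.prod_add]
  exact Finset.sum_congr rfl fun t ht => by rw [Finset.prod_const_one, mul_one]

end Stmt15Aux

theorem stmt15 {V : Type*} [Fintype V] [DecidableEq V] {R : Type*} [CommRing R]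
    (G : SimpleGraph V) [DecidableRel G.Adj] (v : Sym2 V → R) (q : R)
    (i j : V) (hij : i ≠ j) :
    Zmv G Finset.univ q v
      = ∑ W ∈ Finset.univ.filter (fun W : Finset V => i ∈ W ∧ j ∉ W),
          (q - 1 + ∏ e ∈ edgesTo G W j, (1 + v e)) *
            Cmv G W v * Zmv G (Finset.univ \ W) q v := by
  classical
  have hmaps : ∀ A ∈ (edgesWithin G univ).powerset,
      Stmt15Aux.compOf i j A ∈ univ.filter (fun W : Finset V => i ∈ W ∧ j ∉ W) := fun A _ =>
    Finset.mem_filter.mpr ⟨Finset.mem_univ _, Stmt15Aux.mem_compOf_self,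
      Stmt15Aux.not_mem_compOf hij⟩
  rw [Zmv, ← Finset.sum_fiberwise_of_maps_to hmaps (fun A => q ^ kcomp univ A * ∏ e ∈ A, v e)]
  refine Finset.sum_congr rfl fun W hW => ?_
  obtain ⟨-, hiW, hjW⟩ : W ∈ univ ∧ i ∈ W ∧ j ∉ W := by
    simpa using Finset.mem_filter.mp hW
  -- notation
  have hdecomp : ∀ A ∈ (edgesWithin G univ).powerset.filter
      (fun A => Stmt15Aux.compOf i j A = W),
      A ∩ edgesWithin G W ∪ A ∩ edgesTo G W j ∪ A ∩ edgesWithin G (univ \ W) = A := by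
    intro A hA
    obtain ⟨hAp, hAc⟩ := Finset.mem_filter.mp hA
    have hAE : A ⊆ G.edgeFinset := by
      rw [← Stmt15Aux.edgesWithin_univ]; exact Finset.mem_powerset.mp hAp
    rw [← Finset.inter_union_distrib_left, ← Finset.inter_union_distrib_left]
    exact Finset.inter_eq_left.mpr (Stmt15Aux.subset_decomp hij hAE hAc)
  have hstep : ∑ A ∈ (edgesWithin G univ).powerset.filter
        (fun A => Stmt15Aux.compOf i j A = W),
        q ^ kcomp univ A * ∏ e ∈ A, v e
      = ∑ p ∈ ((edgesWithin G W).powerset.filter (fun A => kcomp W A = 1)) ×ˢ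
          ((edgesTo G W j).powerset ×ˢ (edgesWithin G (univ \ W)).powerset),
          q ^ kcomp univ (p.1 ∪ p.2.1 ∪ p.2.2) * ∏ e ∈ p.1 ∪ p.2.1 ∪ p.2.2, v e := by
    refine Finset.sum_nbij'
      (fun A => (A ∩ edgesWithin G W, A ∩ edgesTo G W j, A ∩ edgesWithin G (univ \ W)))
      (fun p => p.1 ∪ p.2.1 ∪ p.2.2) ?_ ?_ ?_ ?_ ?_
    · intro A hA
      obtain ⟨hAp, hAc⟩ := Finset.mem_filter.mp hA
      have hAE : A ⊆ G.edgeFinset := by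
        rw [← Stmt15Aux.edgesWithin_univ]; exact Finset.mem_powerset.mp hAp
      refine Finset.mem_product.mpr ⟨?_, Finset.mem_product.mpr ⟨?_, ?_⟩⟩
      · exact Finset.mem_filter.mpr ⟨Finset.mem_powerset.mpr Finset.inter_subset_right,
          Stmt15Aux.kcomp_inter_one hij hAE hAc⟩
      · exact Finset.mem_powerset.mpr Finset.inter_subset_right
      · exact Finset.mem_powerset.mpr Finset.inter_subset_right
    · intro p hp
      obtain ⟨h1, h23⟩ := Finset.mem_product.mp hp
      obtain ⟨h2, h3⟩ := Finset.mem_product.mp h23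
      obtain ⟨h1p, h1k⟩ := Finset.mem_filter.mp h1
      have hs1 := Finset.mem_powerset.mp h1p
      have hs2 := Finset.mem_powerset.mp h2
      have hs3 := Finset.mem_powerset.mp h3
      refine Finset.mem_filter.mpr ⟨Finset.mem_powerset.mpr ?_,
        Stmt15Aux.compOf_union hiW hjW hs1 hs2 hs3 h1k⟩
      rw [Stmt15Aux.edgesWithin_univ]
      exact Finset.union_subset
        (Finset.union_subset (hs1.trans (Finset.filter_subset _ _))
          (hs2.trans (Finset.filter_subset _ _)))
        (hs3.trans (Finset.filter_subset _ _))
    · intro A hA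
      exact hdecomp A hA
    · intro p hp
      obtain ⟨h1, h23⟩ := Finset.mem_product.mp hp
      obtain ⟨h2, h3⟩ := Finset.mem_product.mp h23
      obtain ⟨h1p, h1k⟩ := Finset.mem_filter.mp h1
      have hs1 := Finset.mem_powerset.mp h1p
      have hs2 := Finset.mem_powerset.mp h2
      have hs3 := Finset.mem_powerset.mp h3
      have d12 : Disjoint p.2.1 (edgesWithin G W) :=
        ((Stmt15Aux.disj₁₂ (G := G) hjW).symm).mono hs2 le_rfl
      have d13 : Disjoint p.2.2 (edgesWithin G W) :=
        ((Stmt15Aux.disj₁₃ (G := G) (W := W)).symm).mono hs3 le_rfl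
      have d21 : Disjoint p.1 (edgesTo G W j) :=
        (Stmt15Aux.disj₁₂ (G := G) hjW).mono hs1 le_rfl
      have d23 : Disjoint p.2.2 (edgesTo G W j) :=
        ((Stmt15Aux.disj₂₃ (G := G) (W := W) (j := j)).symm).mono hs3 le_rfl
      have d31 : Disjoint p.1 (edgesWithin G (univ \ W)) :=
        (Stmt15Aux.disj₁₃ (G := G) (W := W)).mono hs1 le_rfl
      have d32 : Disjoint p.2.1 (edgesWithin G (univ \ W)) :=
        (Stmt15Aux.disj₂₃ (G := G) (W := W) (j := j)).mono hs2 le_rfl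
      have e1 : (p.1 ∪ p.2.1 ∪ p.2.2) ∩ edgesWithin G W = p.1 := by
        rw [Finset.union_inter_distrib_right, Finset.union_inter_distrib_right,
          Finset.inter_eq_left.mpr hs1,
          Finset.disjoint_iff_inter_eq_empty.mp d12,
          Finset.disjoint_iff_inter_eq_empty.mp d13,
          Finset.union_empty, Finset.union_empty]
      have e2 : (p.1 ∪ p.2.1 ∪ p.2.2) ∩ edgesTo G W j = p.2.1 := by
        rw [Finset.union_inter_distrib_right, Finset.union_inter_distrib_right,
          Finset.inter_eq_left.mpr hs2,
          Finset.disjoint_iff_inter_eq_empty.mp d21,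
          Finset.disjoint_iff_inter_eq_empty.mp d23,
          Finset.empty_union, Finset.union_empty]
      have e3 : (p.1 ∪ p.2.1 ∪ p.2.2) ∩ edgesWithin G (univ \ W) = p.2.2 := by
        rw [Finset.union_inter_distrib_right, Finset.union_inter_distrib_right,
          Finset.inter_eq_left.mpr hs3,
          Finset.disjoint_iff_inter_eq_empty.mp d31,
          Finset.disjoint_iff_inter_eq_empty.mp d32,
          Finset.empty_union, Finset.empty_union]
      show (_, _, _) = p
      rw [e1, e2, e3]
    · intro A hA
      have h := hdecomp A hA
      dsimp only
      rw [h]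
  rw [hstep, Cmv, Finset.mul_sum, Finset.sum_mul, Finset.sum_product]
  beta_reduce
  refine Finset.sum_congr rfl fun A₁ hA₁m => ?_
  obtain ⟨h1p, h1k⟩ := Finset.mem_filter.mp hA₁m
  have hs1 := Finset.mem_powerset.mp h1p
  rw [Finset.sum_product]
  have hsumB : ∑ B ∈ (edgesTo G W j).powerset, (if B = ∅ then q else ∏ e ∈ B, v e)
      = q - 1 + ∏ e ∈ edgesTo G W j, (1 + v e) := by
    have h0 : (∅ : Finset (Sym2 V)) ∈ (edgesTo G W j).powerset :=
      Finset.empty_mem_powerset _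
    rw [← Finset.add_sum_erase _ _ h0, if_pos rfl]
    have h2 : ∑ B ∈ ((edgesTo G W j).powerset).erase ∅,
          (if B = ∅ then q else ∏ e ∈ B, v e)
        = ∑ B ∈ ((edgesTo G W j).powerset).erase ∅, ∏ e ∈ B, v e :=
      Finset.sum_congr rfl fun B hB => if_neg (Finset.mem_erase.mp hB).1
    have h3 : (1 : R) + ∑ B ∈ ((edgesTo G W j).powerset).erase ∅, ∏ e ∈ B, v e
        = ∏ e ∈ edgesTo G W j, (1 + v e) := by
      rw [← Stmt15Aux.sum_powerset_prod, ← Finset.add_sum_erase _ _ h0, Finset.prod_empty]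
    have h4 : ∑ B ∈ ((edgesTo G W j).powerset).erase ∅, ∏ e ∈ B, v e
        = (∏ e ∈ edgesTo G W j, (1 + v e)) - 1 := eq_sub_of_add_eq' h3
    rw [h2, h4]
    ring
  have hterm : ∀ B ∈ (edgesTo G W j).powerset,
      ∀ A₂ ∈ (edgesWithin G (univ \ W)).powerset,
      q ^ kcomp univ (A₁ ∪ B ∪ A₂) * ∏ e ∈ A₁ ∪ B ∪ A₂, v e
        = (if B = ∅ then q else ∏ e ∈ B, v e)
            * (q ^ kcomp (univ \ W) A₂ * ∏ e ∈ A₂, v e) * ∏ e ∈ A₁, v e := by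
    intro B hB A₂ hA₂
    have hB2 := Finset.mem_powerset.mp hB
    have hA2 := Finset.mem_powerset.mp hA₂
    have dAB : Disjoint A₁ B := (Stmt15Aux.disj₁₂ (G := G) hjW).mono hs1 hB2
    have dA₁A₂ : Disjoint A₁ A₂ := (Stmt15Aux.disj₁₃ (G := G) (W := W)).mono hs1 hA2
    have dBA₂ : Disjoint B A₂ := (Stmt15Aux.disj₂₃ (G := G) (W := W) (j := j)).mono hB2 hA2
    have dU : Disjoint (A₁ ∪ B) A₂ := Finset.disjoint_union_left.mpr ⟨dA₁A₂, dBA₂⟩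
    rw [Finset.prod_union dU, Finset.prod_union dAB]
    by_cases h0 : B = ∅
    · subst h0
      rw [Finset.union_empty, Stmt15Aux.kcomp_split_empty hiW hjW hs1 hA2 h1k,
        if_pos rfl, Finset.prod_empty, pow_succ]
      ring
    · rw [Stmt15Aux.kcomp_split_nonempty hiW hjW hs1 hB2 hA2 h1k
        (Finset.nonempty_iff_ne_empty.mpr h0), if_neg h0]
      ring
  have hfin : ∑ B ∈ (edgesTo G W j).powerset, ∑ A₂ ∈ (edgesWithin G (univ \ W)).powerset,
        q ^ kcomp univ (A₁ ∪ B ∪ A₂) * ∏ e ∈ A₁ ∪ B ∪ A₂, v e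
      = (q - 1 + ∏ e ∈ edgesTo G W j, (1 + v e)) * (∏ e ∈ A₁, v e)
          * Zmv G (univ \ W) q v := calc
    ∑ B ∈ (edgesTo G W j).powerset, ∑ A₂ ∈ (edgesWithin G (univ \ W)).powerset,
        q ^ kcomp univ (A₁ ∪ B ∪ A₂) * ∏ e ∈ A₁ ∪ B ∪ A₂, v e
      = ∑ B ∈ (edgesTo G W j).powerset, ∑ A₂ ∈ (edgesWithin G (univ \ W)).powerset,
          (if B = ∅ then q else ∏ e ∈ B, v e)
            * (q ^ kcomp (univ \ W) A₂ * ∏ e ∈ A₂, v e) * ∏ e ∈ A₁, v e :=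
        Finset.sum_congr rfl fun B hB =>
          Finset.sum_congr rfl fun A₂ hA₂ => hterm B hB A₂ hA₂
    _ = (∑ B ∈ (edgesTo G W j).powerset, (if B = ∅ then q else ∏ e ∈ B, v e))
          * Zmv G (univ \ W) q v * ∏ e ∈ A₁, v e := by
        rw [Zmv]
        simp only [Finset.sum_mul, Finset.mul_sum]
        exact Finset.sum_comm
    _ = (q - 1 + ∏ e ∈ edgesTo G W j, (1 + v e)) * Zmv G (univ \ W) q v
          * ∏ e ∈ A₁, v e := by rw [hsumB]
    _ = (q - 1 + ∏ e ∈ edgesTo G W j, (1 + v e)) * (∏ e ∈ A₁, v e)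
          * Zmv G (univ \ W) q v := by rw [mul_right_comm]
  exact hfin
end

section
/- Let G = (V,E) be a finite simple graph with V nonempty, and let v : E → ℝ be real edge weights satisfying -1 ≤ v_e ≤ 0 for all e ∈ E. Define F : ℝ → ℝ by F(λ) = Σ_{A ⊆ E : (V,A) connected} λ^{|A| - |V| + 1} ∏_{e ∈ A} v_e (a polynomial in λ, since |A| ≥ |V| - 1 for every connected spanning subgraph). Then for every integer ℓ ≥ 0 and every λ with 0 ≤ λ ≤ 1, one has (-1)^{ℓ + |V| - 1} · F^{(ℓ)}(λ) ≥ 0, where F^{(ℓ)} denotes the ℓ-th derivative of F. -/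
open Finset SimpleGraph

namespace Stmt18Aux

open Polynomial

open scoped Classical
set_option linter.unusedSectionVars false

variable {V : Type*} [Fintype V] [DecidableEq V]

/-- graph on all of `V` with edge set `A` -/
abbrev gph (A : Finset (Sym2 V)) : SimpleGraph V := SimpleGraph.fromEdgeSet (A : Set (Sym2 V))

lemma gph_adj {A : Finset (Sym2 V)} {a b : V} : (gph A).Adj a b ↔ s(a,b) ∈ A ∧ a ≠ b := by
  simp [gph, SimpleGraph.fromEdgeSet_adj]

lemma walk_support_mem {W : Finset V} {A : Finset (Sym2 V)}
    (hAW : ∀ f ∈ A, ∀ u ∈ f, u ∈ W) : ∀ {a b : V} (p : (gph A).Walk a b),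
    a ∈ W → ∀ w ∈ p.support, w ∈ W := by
  intro a b p
  induction p with
  | nil => intro ha w hw; simp at hw; subst hw; exact ha
  | @cons u c b h q ih =>
    intro ha w hw
    have hc : c ∈ W := hAW _ (gph_adj.mp h).1 c (by simp)
    rcases (by simpa using hw : w = u ∨ w ∈ q.support) with h1 | h1
    · subst h1; exact ha
    · exact ih hc w h1

lemma reachable_induce {W : Finset V} {A : Finset (Sym2 V)}
    (hAW : ∀ f ∈ A, ∀ u ∈ f, u ∈ W) : ∀ {a b : V} (_ : (gph A).Walk a b)
    (ha : a ∈ W) (hb : b ∈ W),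
    ((gph A).induce (W : Set V)).Reachable ⟨a, by simpa using ha⟩ ⟨b, by simpa using hb⟩ := by
  intro a b p
  induction p with
  | nil => intro ha hb; exact Reachable.refl _
  | @cons u c b h q ih =>
    intro ha hb
    have hc : c ∈ W := hAW _ (gph_adj.mp h).1 c (by simp)
    have hadj : ((gph A).induce (W : Set V)).Adj ⟨u, by simpa using ha⟩ ⟨c, by simpa using hc⟩ := by
      simpa [SimpleGraph.comap_adj] using h
    exact hadj.reachable.trans (ih hc hb)

lemma kcomp_eq_one_iff {W : Finset V} {A : Finset (Sym2 V)}
    (hAW : ∀ f ∈ A, ∀ u ∈ f, u ∈ W) :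
    kcomp W A = 1 ↔ (W.Nonempty ∧ ∀ a ∈ W, ∀ b ∈ W, (gph A).Reachable a b) := by
  rw [kcomp, Nat.card_eq_one_iff_unique]
  constructor
  · rintro ⟨hsub, hne⟩
    obtain ⟨c⟩ := hne
    obtain ⟨⟨a, ha⟩⟩ := c.exists_rep
    refine ⟨⟨a, by simpa using ha⟩, ?_⟩
    intro u hu w hw
    have h1 : ((gph A).induce (W : Set V)).connectedComponentMk ⟨u, by simpa using hu⟩
        = ((gph A).induce (W : Set V)).connectedComponentMk ⟨w, by simpa using hw⟩ :=
      Subsingleton.elim _ _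
    have hr := (SimpleGraph.ConnectedComponent.eq).mp h1
    simpa using hr.map (SimpleGraph.Embedding.induce (W : Set V)).toHom
  · rintro ⟨⟨a, ha⟩, hreach⟩
    refine ⟨⟨?_⟩, ⟨((gph A).induce (W : Set V)).connectedComponentMk ⟨a, by simpa using ha⟩⟩⟩
    intro c d
    obtain ⟨⟨u, hu⟩, rfl⟩ := c.exists_rep
    obtain ⟨⟨w, hw⟩, rfl⟩ := d.exists_rep
    obtain ⟨p⟩ := hreach u (by simpa using hu) w (by simpa using hw)
    exact (SimpleGraph.ConnectedComponent.eq).mpr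
      (reachable_induce hAW p (by simpa using hu) (by simpa using hw))

lemma gph_mono {A A' : Finset (Sym2 V)} (h : A ⊆ A') : gph A ≤ gph A' :=
  SimpleGraph.fromEdgeSet_mono (by exact_mod_cast h)

lemma reach_mono {A A' : Finset (Sym2 V)} (h : A ⊆ A') {a b : V}
    (hr : (gph A).Reachable a b) : (gph A').Reachable a b :=
  hr.mono (gph_mono h)

/-- deleting one edge: each endpoint-reaching vertex still reaches one endpoint -/
lemma reach_erase {A : Finset (Sym2 V)} {x y : V} :
    ∀ {u t : V} (_ : (gph A).Walk u t), t = x →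
      (gph (A.erase s(x,y))).Reachable u x ∨ (gph (A.erase s(x,y))).Reachable u y := by
  intro u t p
  induction p with
  | nil => rintro rfl; exact Or.inl (Reachable.refl _)
  | @cons u c b h q ih =>
    intro ht
    by_cases he : s(u, c) = s(x, y)
    · rcases Sym2.eq_iff.mp he with ⟨rfl, rfl⟩ | ⟨rfl, rfl⟩
      · exact Or.inl (Reachable.refl _)
      · exact Or.inr (Reachable.refl _)
    · have hadj : (gph (A.erase s(x,y))).Adj u c := by
        rw [gph_adj]
        exact ⟨Finset.mem_erase.mpr ⟨he, (gph_adj.mp h).1⟩, (gph_adj.mp h).2⟩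
      rcases ih ht with h1 | h1
      · exact Or.inl (hadj.reachable.trans h1)
      · exact Or.inr (hadj.reachable.trans h1)

/-- if every edge lies within `S` or within `T`, with `S,T` disjoint, walks from `S` stay in `S` -/
lemma walk_side {A : Finset (Sym2 V)} {S T : Finset V}
    (hside : ∀ f ∈ A, (∀ u ∈ f, u ∈ S) ∨ (∀ u ∈ f, u ∈ T))
    (hdisj : ∀ u, u ∈ S → u ∈ T → False) :
    ∀ {a b : V} (_ : (gph A).Walk a b), a ∈ S → b ∈ S := by
  intro a b p
  induction p with
  | nil => exact id
  | @cons u c b h q ih =>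
    intro ha
    rcases hside _ (gph_adj.mp h).1 with hs | hs
    · exact ih (hs c (by simp))
    · exact absurd (hs u (by simp)) (fun hT => hdisj u ha hT)

/-- transfer a walk whose support lies in `S` to the graph of edges within `S` -/
lemma reach_filter {A : Finset (Sym2 V)} {S : Finset V} :
    ∀ {a b : V} (p : (gph A).Walk a b), (∀ w ∈ p.support, w ∈ S) →
      (gph (A.filter (· ∈ S.sym2))).Reachable a b := by
  intro a b p
  induction p with
  | nil => intro _; exact Reachable.refl _
  | @cons u c b h q ih =>
    intro hsup
    have hu : u ∈ S := hsup u (by simp)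
    have hc : c ∈ S := hsup c (by simp)
    have hadj : (gph (A.filter (· ∈ S.sym2))).Adj u c := by
      rw [gph_adj]
      refine ⟨Finset.mem_filter.mpr ⟨(gph_adj.mp h).1, ?_⟩, (gph_adj.mp h).2⟩
      rw [Finset.mem_sym2_iff]
      intro z hz
      rcases Sym2.mem_iff.mp hz with rfl | rfl
      · exact hu
      · exact hc
    exact hadj.reachable.trans (ih (fun w hw => hsup w (by simp [hw])))

lemma reach_of_mem_support {G : SimpleGraph V} {a b w : V} (p : G.Walk a b)
    (hw : w ∈ p.support) : G.Reachable w b := ⟨p.dropUntil w hw⟩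

lemma reach_of_mem_support' {G : SimpleGraph V} {a b w : V} (p : G.Walk a b)
    (hw : w ∈ p.support) : G.Reachable a w := ⟨p.takeUntil w hw⟩

lemma sym2_exists {e : Sym2 V} (h : ¬ e.IsDiag) : ∃ x y : V, x ≠ y ∧ e = s(x,y) := by
  induction e using Sym2.ind with
  | _ x y => exact ⟨x, y, by simpa using h, rfl⟩
noncomputable def WxOf (W : Finset V) (A : Finset (Sym2 V)) (x : V) : Finset V :=
  W.filter (fun u => (gph A).Reachable u x)

noncomputable def edgesIn (S : Finset V) (A : Finset (Sym2 V)) : Finset (Sym2 V) :=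
  A.filter (· ∈ S.sym2)

lemma mem_WxOf {W : Finset V} {A : Finset (Sym2 V)} {x u : V} :
    u ∈ WxOf W A x ↔ u ∈ W ∧ (gph A).Reachable u x := Finset.mem_filter

lemma mem_edgesIn {S : Finset V} {A : Finset (Sym2 V)} {f : Sym2 V} :
    f ∈ edgesIn S A ↔ f ∈ A ∧ ∀ u ∈ f, u ∈ S := by
  rw [edgesIn, Finset.mem_filter, Finset.mem_sym2_iff]

lemma edgesIn_within {S : Finset V} {A : Finset (Sym2 V)} :
    ∀ f ∈ edgesIn S A, ∀ u ∈ f, u ∈ S := fun f hf => (mem_edgesIn.mp hf).2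

lemma structure_lemma {W : Finset V} {A' : Finset (Sym2 V)} {x y : V}
    (hvA : ∀ f ∈ A', ¬ f.IsDiag ∧ ∀ u ∈ f, u ∈ W)
    (hx : x ∈ W) (hy : y ∈ W) (hxy : x ≠ y) (heA' : s(x,y) ∉ A')
    (hco : kcomp W (insert s(x,y) A') = 1) (hnc : kcomp W A' ≠ 1) :
    x ∈ WxOf W A' x ∧ y ∈ W \ WxOf W A' x ∧
    kcomp (WxOf W A' x) (edgesIn (WxOf W A' x) A') = 1 ∧
    kcomp (W \ WxOf W A' x) (edgesIn (W \ WxOf W A' x) A') = 1 ∧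
    A' = edgesIn (WxOf W A' x) A' ∪ edgesIn (W \ WxOf W A' x) A' ∧
    Disjoint (edgesIn (WxOf W A' x) A') (edgesIn (W \ WxOf W A' x) A') := by
  have hAW : ∀ f ∈ A', ∀ u ∈ f, u ∈ W := fun f hf => (hvA f hf).2
  have hvalid' : ∀ f ∈ insert s(x,y) A', ∀ u ∈ f, u ∈ W := by
    intro f hf u hu
    rcases Finset.mem_insert.mp hf with rfl | hf
    · rcases Sym2.mem_iff.mp hu with rfl | rfl <;> assumption
    · exact hAW f hf u hu
  have hRW := ((kcomp_eq_one_iff hvalid').mp hco).2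
  have herase : (insert s(x,y) A').erase s(x,y) = A' := Finset.erase_insert heA'
  have hxyreach : ∀ u ∈ W, (gph A').Reachable u x ∨ (gph A').Reachable u y := by
    intro u hu
    obtain ⟨p⟩ := hRW u hu x hx
    have h := reach_erase (A := insert s(x,y) A') (y := y) p rfl
    rwa [herase] at h
  have hyx : ¬ (gph A').Reachable y x := by
    intro hr
    apply hnc
    rw [kcomp_eq_one_iff hAW]
    refine ⟨⟨x, hx⟩, ?_⟩
    have hallx : ∀ a ∈ W, (gph A').Reachable a x := by
      intro a ha; rcases hxyreach a ha with h | h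
      · exact h
      · exact h.trans hr
    intro a ha b hb; exact (hallx a ha).trans (hallx b hb).symm
  have hxWx : x ∈ WxOf W A' x := mem_WxOf.mpr ⟨hx, Reachable.refl _⟩
  have hyWy : y ∈ W \ WxOf W A' x := by
    rw [Finset.mem_sdiff]
    exact ⟨hy, fun hmem => hyx (mem_WxOf.mp hmem).2⟩
  have hsideY : ∀ u ∈ W \ WxOf W A' x, (gph A').Reachable u y := by
    intro u hu
    rcases hxyreach u (Finset.mem_sdiff.mp hu).1 with h | h
    · exact absurd (mem_WxOf.mpr ⟨(Finset.mem_sdiff.mp hu).1, h⟩) (Finset.mem_sdiff.mp hu).2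
    · exact h
  have hconnX : kcomp (WxOf W A' x) (edgesIn (WxOf W A' x) A') = 1 := by
    rw [kcomp_eq_one_iff edgesIn_within]
    refine ⟨⟨x, hxWx⟩, ?_⟩
    suffices hsuff : ∀ a ∈ WxOf W A' x, (gph (edgesIn (WxOf W A' x) A')).Reachable a x by
      intro a ha b hb; exact (hsuff a ha).trans (hsuff b hb).symm
    intro a ha
    obtain ⟨haW, har⟩ := mem_WxOf.mp ha
    obtain ⟨p⟩ := har
    refine reach_filter p ?_
    intro w hw
    exact mem_WxOf.mpr ⟨walk_support_mem hAW p haW w hw, reach_of_mem_support p hw⟩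
  have hconnY : kcomp (W \ WxOf W A' x) (edgesIn (W \ WxOf W A' x) A') = 1 := by
    rw [kcomp_eq_one_iff edgesIn_within]
    refine ⟨⟨y, hyWy⟩, ?_⟩
    suffices hsuff : ∀ a ∈ W \ WxOf W A' x,
        (gph (edgesIn (W \ WxOf W A' x) A')).Reachable a y by
      intro a ha b hb; exact (hsuff a ha).trans (hsuff b hb).symm
    intro a ha
    obtain ⟨p⟩ := hsideY a ha
    refine reach_filter p ?_
    intro w hw
    have hwW : w ∈ W := walk_support_mem hAW p (Finset.mem_sdiff.mp ha).1 w hw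
    refine Finset.mem_sdiff.mpr ⟨hwW, ?_⟩
    intro hwWx
    have h1 : (gph A').Reachable a w := reach_of_mem_support' p hw
    have h2 : (gph A').Reachable w x := (mem_WxOf.mp hwWx).2
    exact (Finset.mem_sdiff.mp ha).2
      (mem_WxOf.mpr ⟨(Finset.mem_sdiff.mp ha).1, h1.trans h2⟩)
  have hpart : A' = edgesIn (WxOf W A' x) A' ∪ edgesIn (W \ WxOf W A' x) A' := by
    apply Finset.Subset.antisymm
    · intro f hf
      obtain ⟨a, b, hab, rfl⟩ := sym2_exists (hvA f hf).1
      have haW : a ∈ W := hAW _ hf a (by simp)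
      have hbW : b ∈ W := hAW _ hf b (by simp)
      have hadj : (gph A').Adj a b := gph_adj.mpr ⟨hf, hab⟩
      by_cases hax : a ∈ WxOf W A' x
      · have hbx : b ∈ WxOf W A' x :=
          mem_WxOf.mpr ⟨hbW, hadj.symm.reachable.trans (mem_WxOf.mp hax).2⟩
        refine Finset.mem_union_left _ (mem_edgesIn.mpr ⟨hf, ?_⟩)
        intro z hz; rcases Sym2.mem_iff.mp hz with rfl | rfl <;> assumption
      · have hbx : b ∉ WxOf W A' x := fun hbx =>
          hax (mem_WxOf.mpr ⟨haW, hadj.reachable.trans (mem_WxOf.mp hbx).2⟩)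
        refine Finset.mem_union_right _ (mem_edgesIn.mpr ⟨hf, ?_⟩)
        intro z hz; rcases Sym2.mem_iff.mp hz with rfl | rfl
        · exact Finset.mem_sdiff.mpr ⟨haW, hax⟩
        · exact Finset.mem_sdiff.mpr ⟨hbW, hbx⟩
    · intro f hf; rcases Finset.mem_union.mp hf with h | h <;> exact (mem_edgesIn.mp h).1
  have hdisj : Disjoint (edgesIn (WxOf W A' x) A') (edgesIn (W \ WxOf W A' x) A') := by
    rw [Finset.disjoint_left]
    intro f hf1 hf2
    have h1 := (mem_edgesIn.mp hf1).2 f.out.1 (Sym2.out_fst_mem f)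
    have h2 := (mem_edgesIn.mp hf2).2 f.out.1 (Sym2.out_fst_mem f)
    exact (Finset.mem_sdiff.mp h2).2 h1
  exact ⟨hxWx, hyWy, hconnX, hconnY, hpart, hdisj⟩
lemma glue_lemma {W Wx : Finset V} {Ax Ay : Finset (Sym2 V)} {x y : V}
    (hWxW : Wx ⊆ W) (hx : x ∈ Wx) (hyW : y ∈ W) (hyWx : y ∉ Wx) (hxy : x ≠ y)
    (hvAx : ∀ f ∈ Ax, ∀ u ∈ f, u ∈ Wx) (hvAy : ∀ f ∈ Ay, ∀ u ∈ f, u ∈ W \ Wx)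
    (hcx : kcomp Wx Ax = 1) (hcy : kcomp (W \ Wx) Ay = 1) :
    kcomp W (insert s(x,y) (Ax ∪ Ay)) = 1 ∧
    kcomp W (Ax ∪ Ay) ≠ 1 ∧
    s(x,y) ∉ Ax ∪ Ay ∧
    WxOf W (Ax ∪ Ay) x = Wx ∧
    edgesIn Wx (Ax ∪ Ay) = Ax ∧
    edgesIn (W \ Wx) (Ax ∪ Ay) = Ay := by
  have hxW : x ∈ W := hWxW hx
  have hg3 : s(x,y) ∉ Ax ∪ Ay := by
    intro h
    rcases Finset.mem_union.mp h with h | h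
    · exact hyWx (hvAx _ h y (by simp))
    · exact (Finset.mem_sdiff.mp (hvAy _ h x (by simp))).2 hx
  have hreachX : ∀ u ∈ Wx, (gph Ax).Reachable u x :=
    fun u hu => ((kcomp_eq_one_iff hvAx).mp hcx).2 u hu x hx
  have hyWy : y ∈ W \ Wx := Finset.mem_sdiff.mpr ⟨hyW, hyWx⟩
  have hreachY : ∀ u ∈ W \ Wx, (gph Ay).Reachable u y :=
    fun u hu => ((kcomp_eq_one_iff hvAy).mp hcy).2 u hu y hyWy
  have hsubx : Ax ⊆ Ax ∪ Ay := Finset.subset_union_left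
  have hsuby : Ay ⊆ Ax ∪ Ay := Finset.subset_union_right
  have hvU : ∀ f ∈ Ax ∪ Ay, ∀ u ∈ f, u ∈ W := by
    intro f hf u hu
    rcases Finset.mem_union.mp hf with h | h
    · exact hWxW (hvAx _ h u hu)
    · exact (Finset.mem_sdiff.mp (hvAy _ h u hu)).1
  have hvI : ∀ f ∈ insert s(x,y) (Ax ∪ Ay), ∀ u ∈ f, u ∈ W := by
    intro f hf u hu
    rcases Finset.mem_insert.mp hf with rfl | hf
    · rcases Sym2.mem_iff.mp hu with rfl | rfl <;> assumption
    · exact hvU f hf u hu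
  have hsubI : Ax ∪ Ay ⊆ insert s(x,y) (Ax ∪ Ay) := Finset.subset_insert _ _
  have hadjxy : (gph (insert s(x,y) (Ax ∪ Ay))).Adj x y :=
    gph_adj.mpr ⟨Finset.mem_insert_self _ _, hxy⟩
  have hallx : ∀ u ∈ W, (gph (insert s(x,y) (Ax ∪ Ay))).Reachable u x := by
    intro u hu
    by_cases hux : u ∈ Wx
    · exact reach_mono (hsubx.trans hsubI) (hreachX u hux)
    · have h1 := reach_mono (hsuby.trans hsubI) (hreachY u (Finset.mem_sdiff.mpr ⟨hu, hux⟩))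
      exact h1.trans hadjxy.symm.reachable
  have hg1 : kcomp W (insert s(x,y) (Ax ∪ Ay)) = 1 := by
    rw [kcomp_eq_one_iff hvI]
    exact ⟨⟨x, hxW⟩, fun a ha b hb => (hallx a ha).trans (hallx b hb).symm⟩
  have hside : ∀ f ∈ Ax ∪ Ay, (∀ u ∈ f, u ∈ Wx) ∨ (∀ u ∈ f, u ∈ W \ Wx) := by
    intro f hf
    rcases Finset.mem_union.mp hf with h | h
    · exact Or.inl (hvAx _ h)
    · exact Or.inr (hvAy _ h)
  have hdisj : ∀ u : V, u ∈ Wx → u ∈ W \ Wx → False :=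
    fun u h1 h2 => (Finset.mem_sdiff.mp h2).2 h1
  have hside' : ∀ f ∈ Ax ∪ Ay, (∀ u ∈ f, u ∈ W \ Wx) ∨ (∀ u ∈ f, u ∈ Wx) :=
    fun f hf => (hside f hf).symm
  have hg2 : kcomp W (Ax ∪ Ay) ≠ 1 := by
    intro h
    obtain ⟨p⟩ := ((kcomp_eq_one_iff hvU).mp h).2 y hyW x hxW
    exact hdisj x hx (walk_side hside' (fun u h1 h2 => hdisj u h2 h1) p hyWy)
  have hg4 : WxOf W (Ax ∪ Ay) x = Wx := by
    ext u
    rw [mem_WxOf]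
    constructor
    · rintro ⟨huW, ⟨p⟩⟩
      by_cases hux : u ∈ Wx
      · exact hux
      · exact absurd (walk_side hside' (fun a h1 h2 => hdisj a h2 h1) p
          (Finset.mem_sdiff.mpr ⟨huW, hux⟩)) (fun h => (Finset.mem_sdiff.mp h).2 hx)
    · intro hu
      exact ⟨hWxW hu, reach_mono hsubx (hreachX u hu)⟩
  have hg5 : edgesIn Wx (Ax ∪ Ay) = Ax := by
    ext f
    rw [mem_edgesIn]
    constructor
    · rintro ⟨hf, hin⟩
      rcases Finset.mem_union.mp hf with h | h
      · exact h
      · exact absurd (hin _ (Sym2.out_fst_mem f)) fun h1 =>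
          (Finset.mem_sdiff.mp (hvAy _ h _ (Sym2.out_fst_mem f))).2 h1
    · intro hf
      exact ⟨hsubx hf, hvAx _ hf⟩
  have hg6 : edgesIn (W \ Wx) (Ax ∪ Ay) = Ay := by
    ext f
    rw [mem_edgesIn]
    constructor
    · rintro ⟨hf, hin⟩
      rcases Finset.mem_union.mp hf with h | h
      · exact absurd (hin _ (Sym2.out_fst_mem f)) fun h1 =>
          (Finset.mem_sdiff.mp h1).2 (hvAx _ h _ (Sym2.out_fst_mem f))
      · exact h
    · intro hf
      exact ⟨hsuby hf, hvAy _ hf⟩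
  exact ⟨hg1, hg2, hg3, hg4, hg5, hg6⟩
lemma reach_empty {a b : V} (h : (gph (∅ : Finset (Sym2 V))).Reachable a b) : a = b := by
  obtain ⟨p⟩ := h
  cases p with
  | nil => rfl
  | cons h q => exact absurd (gph_adj.mp h).1 (by simp)

lemma conn_insert {W : Finset V} {A : Finset (Sym2 V)} {x y : V}
    (hx : x ∈ W) (hy : y ∈ W)
    (hAW : ∀ f ∈ A, ∀ u ∈ f, u ∈ W) (hc : kcomp W A = 1) :
    kcomp W (insert s(x,y) A) = 1 := by
  have hAW' : ∀ f ∈ insert s(x,y) A, ∀ u ∈ f, u ∈ W := by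
    intro f hf u hu
    rcases Finset.mem_insert.mp hf with rfl | hf
    · rcases Sym2.mem_iff.mp hu with rfl | rfl <;> assumption
    · exact hAW f hf u hu
  rw [kcomp_eq_one_iff hAW'] at *
  exact ⟨(kcomp_eq_one_iff hAW |>.mp hc).1,
    fun a ha b hb => reach_mono (Finset.subset_insert _ _)
      ((kcomp_eq_one_iff hAW |>.mp hc).2 a ha b hb)⟩

lemma card_le_of_conn : ∀ A : Finset (Sym2 V), ∀ W : Finset V,
    (∀ f ∈ A, ¬ f.IsDiag ∧ ∀ u ∈ f, u ∈ W) → kcomp W A = 1 → W.card ≤ A.card + 1 := by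
  intro A
  induction A using Finset.strongInductionOn with
  | _ A ih =>
    intro W hvA hconn
    rcases Finset.eq_empty_or_nonempty A with rfl | ⟨e, he⟩
    · have h := (kcomp_eq_one_iff (by simp)).mp hconn
      have : W.card ≤ 1 :=
        Finset.card_le_one.mpr (fun a ha b hb => reach_empty (h.2 a ha b hb))
      omega
    · obtain ⟨x, y, hxy, rfl⟩ := sym2_exists (hvA e he).1
      have hx : x ∈ W := (hvA _ he).2 x (by simp)
      have hy : y ∈ W := (hvA _ he).2 y (by simp)
      have hvA' : ∀ f ∈ A.erase s(x,y), ¬ f.IsDiag ∧ ∀ u ∈ f, u ∈ W :=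
        fun f hf => hvA f (Finset.mem_of_mem_erase hf)
      have hcard : 1 ≤ A.card := Finset.card_pos.mpr ⟨_, he⟩
      by_cases hc : kcomp W (A.erase s(x,y)) = 1
      · have := ih _ (Finset.erase_ssubset he) W hvA' hc
        have := Finset.card_erase_of_mem he
        omega
      · have hco : kcomp W (insert s(x,y) (A.erase s(x,y))) = 1 := by
          rwa [Finset.insert_erase he]
        obtain ⟨hxWx, hyWy, hcx, hcy, hpart, hdisj⟩ :=
          structure_lemma hvA' hx hy hxy (Finset.notMem_erase _ _) hco hc
        set Wx := WxOf W (A.erase s(x,y)) x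
        set Ax := edgesIn Wx (A.erase s(x,y))
        set Ay := edgesIn (W \ Wx) (A.erase s(x,y))
        have hAxsub : Ax ⊆ A.erase s(x,y) := Finset.filter_subset _ _
        have hAysub : Ay ⊆ A.erase s(x,y) := Finset.filter_subset _ _
        have hAe : A.erase s(x,y) ⊂ A := Finset.erase_ssubset he
        have h1 := ih Ax (lt_of_le_of_lt hAxsub hAe) Wx
          (fun f hf => ⟨(hvA f (Finset.mem_of_mem_erase (hAxsub hf))).1, edgesIn_within f hf⟩)
          hcx
        have h2 := ih Ay (lt_of_le_of_lt hAysub hAe) (W \ Wx)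
          (fun f hf => ⟨(hvA f (Finset.mem_of_mem_erase (hAysub hf))).1, edgesIn_within f hf⟩)
          hcy
        have hWcard : (W \ Wx).card + Wx.card = W.card :=
          Finset.card_sdiff_add_card_eq_card (Finset.filter_subset _ _)
        have hAcard : (A.erase s(x,y)).card = Ax.card + Ay.card := by
          rw [hpart]; exact Finset.card_union_of_disjoint hdisj
        have := Finset.card_erase_of_mem he
        omega
noncomputable def Pg (v : Sym2 V → ℝ) (W : Finset V) (B : Finset (Sym2 V)) : Polynomial ℝ :=
  ∑ A ∈ B.powerset.filter (fun A => kcomp W A = 1),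
    Polynomial.C (∏ e ∈ A, v e) * Polynomial.X ^ (A.card + 1 - W.card)

lemma key_identity (v : Sym2 V → ℝ) {W : Finset V} {B : Finset (Sym2 V)} {x y : V}
    (hvB : ∀ f ∈ B, ¬ f.IsDiag ∧ ∀ u ∈ f, u ∈ W)
    (hxy : x ≠ y) (hx : x ∈ W) (hy : y ∈ W) (heB : s(x,y) ∈ B) :
    Pg v W B = (1 + C (v s(x,y)) * X) * Pg v W (B.erase s(x,y))
      + C (v s(x,y)) * ∑ Wx ∈ (W.erase y).powerset.filter (fun Wx => x ∈ Wx),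
          Pg v Wx (edgesIn Wx (B.erase s(x,y)))
            * Pg v (W \ Wx) (edgesIn (W \ Wx) (B.erase s(x,y))) := by
  have heB' : s(x,y) ∉ B.erase s(x,y) := Finset.notMem_erase _ _
  have hvB' : ∀ f ∈ B.erase s(x,y), ¬ f.IsDiag ∧ ∀ u ∈ f, u ∈ W :=
    fun f hf => hvB f (Finset.mem_of_mem_erase hf)
  have h0 : Pg v W B = Pg v W (B.erase s(x,y))
      + ∑ A ∈ (B.erase s(x,y)).powerset,
          (if kcomp W (insert s(x,y) A) = 1
           then C (∏ f ∈ insert s(x,y) A, v f) * X ^ ((insert s(x,y) A).card + 1 - W.card)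
           else 0) := by
    rw [Pg, Finset.sum_filter]
    conv_lhs => rw [show B = insert s(x,y) (B.erase s(x,y)) from (Finset.insert_erase heB).symm]
    rw [Finset.sum_powerset_insert heB']
    rw [Pg, Finset.sum_filter]
  rw [h0]
  rw [← Finset.sum_filter_add_sum_filter_not ((B.erase s(x,y)).powerset)
      (fun A => kcomp W A = 1)]
  have hconnpart : ∑ A ∈ (B.erase s(x,y)).powerset.filter (fun A => kcomp W A = 1),
      (if kcomp W (insert s(x,y) A) = 1
       then C (∏ f ∈ insert s(x,y) A, v f) * X ^ ((insert s(x,y) A).card + 1 - W.card)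
       else 0) = C (v s(x,y)) * X * Pg v W (B.erase s(x,y)) := by
    rw [Pg, Finset.mul_sum]
    apply Finset.sum_congr rfl
    intro A hA
    obtain ⟨hA1, hcA⟩ := Finset.mem_filter.mp hA
    have hAB' : A ⊆ B.erase s(x,y) := Finset.mem_powerset.mp hA1
    have heA : s(x,y) ∉ A := fun h => heB' (hAB' h)
    have hvA : ∀ f ∈ A, ¬ f.IsDiag ∧ ∀ u ∈ f, u ∈ W := fun f hf => hvB' f (hAB' hf)
    have hins : kcomp W (insert s(x,y) A) = 1 :=
      conn_insert hx hy (fun f hf => (hvA f hf).2) hcA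
    rw [if_pos hins, Finset.prod_insert heA, Finset.card_insert_of_notMem heA]
    have hWle : W.card ≤ A.card + 1 := card_le_of_conn A W hvA hcA
    have hexp : A.card + 1 + 1 - W.card = (A.card + 1 - W.card) + 1 := by omega
    rw [hexp, map_mul, pow_succ]
    ring
  rw [hconnpart]
  have hnconnpart : ∑ A ∈ (B.erase s(x,y)).powerset.filter (fun A => ¬ kcomp W A = 1),
      (if kcomp W (insert s(x,y) A) = 1
       then C (∏ f ∈ insert s(x,y) A, v f) * X ^ ((insert s(x,y) A).card + 1 - W.card)
       else 0)
      = ∑ A ∈ (B.erase s(x,y)).powerset.filter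
            (fun A => (¬ kcomp W A = 1) ∧ kcomp W (insert s(x,y) A) = 1),
          C (∏ f ∈ insert s(x,y) A, v f) * X ^ ((insert s(x,y) A).card + 1 - W.card) := by
    rw [← Finset.sum_filter, Finset.filter_filter]
  rw [hnconnpart]
  have hbij : ∑ A ∈ (B.erase s(x,y)).powerset.filter
            (fun A => (¬ kcomp W A = 1) ∧ kcomp W (insert s(x,y) A) = 1),
          C (∏ f ∈ insert s(x,y) A, v f) * X ^ ((insert s(x,y) A).card + 1 - W.card)
      = ∑ q ∈ ((W.erase y).powerset.filter (fun Wx => x ∈ Wx)).sigma (fun Wx =>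
            ((edgesIn Wx (B.erase s(x,y))).powerset.filter (fun Ax => kcomp Wx Ax = 1)) ×ˢ
            ((edgesIn (W \ Wx) (B.erase s(x,y))).powerset.filter
              (fun Ay => kcomp (W \ Wx) Ay = 1))),
          C (v s(x,y)) * ((C (∏ f ∈ q.2.1, v f) * X ^ (q.2.1.card + 1 - q.1.card)) *
              (C (∏ f ∈ q.2.2, v f) * X ^ (q.2.2.card + 1 - (W \ q.1).card))) := by
    refine Finset.sum_nbij'
      (fun A => ⟨WxOf W A x, (edgesIn (WxOf W A x) A, edgesIn (W \ WxOf W A x) A)⟩)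
      (fun q => q.2.1 ∪ q.2.2) ?_ ?_ ?_ ?_ ?_
    · -- hi
      intro A hA
      obtain ⟨hA1, hnA, hcA⟩ := Finset.mem_filter.mp hA
      have hAB' : A ⊆ B.erase s(x,y) := Finset.mem_powerset.mp hA1
      have heA : s(x,y) ∉ A := fun h => heB' (hAB' h)
      have hvA : ∀ f ∈ A, ¬ f.IsDiag ∧ ∀ u ∈ f, u ∈ W := fun f hf => hvB' f (hAB' hf)
      obtain ⟨hxWx, hyWy, hcx, hcy, hpart, hdisj⟩ :=
        structure_lemma hvA hx hy hxy heA hcA hnA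
      rw [Finset.mem_sigma, Finset.mem_product]
      refine ⟨Finset.mem_filter.mpr ⟨Finset.mem_powerset.mpr
        (Finset.subset_erase.mpr ⟨Finset.filter_subset _ _, (Finset.mem_sdiff.mp hyWy).2⟩),
          hxWx⟩, ?_, ?_⟩
      · exact Finset.mem_filter.mpr ⟨Finset.mem_powerset.mpr
          (Finset.filter_subset_filter _ hAB'), hcx⟩
      · exact Finset.mem_filter.mpr ⟨Finset.mem_powerset.mpr
          (Finset.filter_subset_filter _ hAB'), hcy⟩
    · -- hj
      rintro ⟨Wx, Ax, Ay⟩ hq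
      rw [Finset.mem_sigma, Finset.mem_product] at hq
      obtain ⟨hWq, hAxq, hAyq⟩ := hq
      obtain ⟨hW1, hxWx⟩ := Finset.mem_filter.mp hWq
      obtain ⟨hWsub, hyWx⟩ := Finset.subset_erase.mp (Finset.mem_powerset.mp hW1)
      obtain ⟨hAx1, hcx⟩ := Finset.mem_filter.mp hAxq
      obtain ⟨hAy1, hcy⟩ := Finset.mem_filter.mp hAyq
      have hAxsub : Ax ⊆ edgesIn Wx (B.erase s(x,y)) := Finset.mem_powerset.mp hAx1
      have hAysub : Ay ⊆ edgesIn (W \ Wx) (B.erase s(x,y)) := Finset.mem_powerset.mp hAy1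
      have hvAx : ∀ f ∈ Ax, ∀ u ∈ f, u ∈ Wx := fun f hf => (mem_edgesIn.mp (hAxsub hf)).2
      have hvAy : ∀ f ∈ Ay, ∀ u ∈ f, u ∈ W \ Wx := fun f hf => (mem_edgesIn.mp (hAysub hf)).2
      obtain ⟨hg1, hg2, hg3, hg4, hg5, hg6⟩ :=
        glue_lemma hWsub hxWx hy hyWx hxy hvAx hvAy hcx hcy
      refine Finset.mem_filter.mpr ⟨Finset.mem_powerset.mpr (Finset.union_subset
        (fun f hf => (mem_edgesIn.mp (hAxsub hf)).1)
        (fun f hf => (mem_edgesIn.mp (hAysub hf)).1)), hg2, hg1⟩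
    · -- left inverse
      intro A hA
      obtain ⟨hA1, hnA, hcA⟩ := Finset.mem_filter.mp hA
      have hAB' : A ⊆ B.erase s(x,y) := Finset.mem_powerset.mp hA1
      have heA : s(x,y) ∉ A := fun h => heB' (hAB' h)
      have hvA : ∀ f ∈ A, ¬ f.IsDiag ∧ ∀ u ∈ f, u ∈ W := fun f hf => hvB' f (hAB' hf)
      obtain ⟨hxWx, hyWy, hcx, hcy, hpart, hdisj⟩ :=
        structure_lemma hvA hx hy hxy heA hcA hnA
      exact hpart.symm
    · -- right inverse
      rintro ⟨Wx, Ax, Ay⟩ hq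
      rw [Finset.mem_sigma, Finset.mem_product] at hq
      obtain ⟨hWq, hAxq, hAyq⟩ := hq
      obtain ⟨hW1, hxWx⟩ := Finset.mem_filter.mp hWq
      obtain ⟨hWsub, hyWx⟩ := Finset.subset_erase.mp (Finset.mem_powerset.mp hW1)
      obtain ⟨hAx1, hcx⟩ := Finset.mem_filter.mp hAxq
      obtain ⟨hAy1, hcy⟩ := Finset.mem_filter.mp hAyq
      have hAxsub : Ax ⊆ edgesIn Wx (B.erase s(x,y)) := Finset.mem_powerset.mp hAx1
      have hAysub : Ay ⊆ edgesIn (W \ Wx) (B.erase s(x,y)) := Finset.mem_powerset.mp hAy1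
      have hvAx : ∀ f ∈ Ax, ∀ u ∈ f, u ∈ Wx := fun f hf => (mem_edgesIn.mp (hAxsub hf)).2
      have hvAy : ∀ f ∈ Ay, ∀ u ∈ f, u ∈ W \ Wx := fun f hf => (mem_edgesIn.mp (hAysub hf)).2
      obtain ⟨hg1, hg2, hg3, hg4, hg5, hg6⟩ :=
        glue_lemma hWsub hxWx hy hyWx hxy hvAx hvAy hcx hcy
      simp only [hg4, hg5, hg6]
    · -- values
      intro A hA
      obtain ⟨hA1, hnA, hcA⟩ := Finset.mem_filter.mp hA
      have hAB' : A ⊆ B.erase s(x,y) := Finset.mem_powerset.mp hA1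
      have heA : s(x,y) ∉ A := fun h => heB' (hAB' h)
      have hvA : ∀ f ∈ A, ¬ f.IsDiag ∧ ∀ u ∈ f, u ∈ W := fun f hf => hvB' f (hAB' hf)
      obtain ⟨hxWx, hyWy, hcx, hcy, hpart, hdisj⟩ :=
        structure_lemma hvA hx hy hxy heA hcA hnA
      set Wx := WxOf W A x
      set Ax := edgesIn Wx A
      set Ay := edgesIn (W \ Wx) A
      have hb1 : Wx.card ≤ Ax.card + 1 := card_le_of_conn Ax Wx
        (fun f hf => ⟨(hvA f (Finset.filter_subset _ _ hf)).1, edgesIn_within f hf⟩) hcx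
      have hb2 : (W \ Wx).card ≤ Ay.card + 1 := card_le_of_conn Ay (W \ Wx)
        (fun f hf => ⟨(hvA f (Finset.filter_subset _ _ hf)).1, edgesIn_within f hf⟩) hcy
      have hWc : (W \ Wx).card + Wx.card = W.card :=
        Finset.card_sdiff_add_card_eq_card (Finset.filter_subset _ _)
      have hAc : A.card = Ax.card + Ay.card := by
        conv_lhs => rw [hpart]
        exact Finset.card_union_of_disjoint hdisj
      have hexp : (insert s(x,y) A).card + 1 - W.card
          = (Ax.card + 1 - Wx.card) + (Ay.card + 1 - (W \ Wx).card) := by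
        rw [Finset.card_insert_of_notMem heA]
        omega
      have hprod : ∏ f ∈ insert s(x,y) A, v f = v s(x,y) * ((∏ f ∈ Ax, v f) * ∏ f ∈ Ay, v f) := by
        rw [Finset.prod_insert heA]
        congr 1
        conv_lhs => rw [hpart]
        exact Finset.prod_union hdisj
      rw [hexp, hprod, map_mul, map_mul, pow_add]
      ring
  rw [hbij]
  have hassemble : ∑ q ∈ ((W.erase y).powerset.filter (fun Wx => x ∈ Wx)).sigma (fun Wx =>
            ((edgesIn Wx (B.erase s(x,y))).powerset.filter (fun Ax => kcomp Wx Ax = 1)) ×ˢ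
            ((edgesIn (W \ Wx) (B.erase s(x,y))).powerset.filter
              (fun Ay => kcomp (W \ Wx) Ay = 1))),
          C (v s(x,y)) * ((C (∏ f ∈ q.2.1, v f) * X ^ (q.2.1.card + 1 - q.1.card)) *
              (C (∏ f ∈ q.2.2, v f) * X ^ (q.2.2.card + 1 - (W \ q.1).card)))
      = C (v s(x,y)) * ∑ Wx ∈ (W.erase y).powerset.filter (fun Wx => x ∈ Wx),
          Pg v Wx (edgesIn Wx (B.erase s(x,y)))
            * Pg v (W \ Wx) (edgesIn (W \ Wx) (B.erase s(x,y))) := by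
    rw [Finset.sum_sigma, Finset.mul_sum]
    apply Finset.sum_congr rfl
    intro Wx _
    rw [Pg, Pg, Finset.sum_mul_sum, Finset.sum_product, Finset.mul_sum]
    apply Finset.sum_congr rfl
    intro Ax _
    rw [Finset.mul_sum]
  rw [hassemble]
  ring
lemma iter_deriv_linear_mul (a : ℝ) (Q : Polynomial ℝ) : ∀ ℓ : ℕ,
    derivative^[ℓ + 1] ((1 + C a * X) * Q)
      = (1 + C a * X) * derivative^[ℓ + 1] Q + C ((ℓ + 1 : ℕ) * a) * derivative^[ℓ] Q := by
  intro ℓ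
  induction ℓ with
  | zero =>
    show derivative ((1 + C a * X) * Q)
      = (1 + C a * X) * derivative Q + C ((0 + 1 : ℕ) * a) * derivative^[0] Q
    rw [derivative_mul]
    simp only [derivative_add, derivative_one, derivative_C_mul, derivative_X,
      Function.iterate_zero, id_eq]
    push_cast
    ring
  | succ ℓ ih =>
    rw [Function.iterate_succ_apply' derivative (ℓ + 1) ((1 + C a * X) * Q), ih,
      derivative_add, derivative_mul, derivative_C_mul,
      ← Function.iterate_succ_apply' derivative (ℓ + 1) Q,
      ← Function.iterate_succ_apply' derivative ℓ Q]
    simp only [derivative_add, derivative_one, derivative_C_mul, derivative_X]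
    push_cast
    ring_nf
    simp only [Nat.succ_eq_add_one]
    ring_nf
    rw [show ((ℓ : ℝ) * a + a * 2) = ((ℓ : ℝ) * a + a) + a by ring, map_add, map_add]
    rw [map_add]
    ring
lemma iter_deriv_add (ℓ : ℕ) : ∀ p q : Polynomial ℝ,
    derivative^[ℓ] (p + q) = derivative^[ℓ] p + derivative^[ℓ] q := by
  induction ℓ with
  | zero => intro p q; simp
  | succ m ihm =>
    intro p q
    rw [Function.iterate_succ_apply, Function.iterate_succ_apply, Function.iterate_succ_apply,
      derivative_add, ihm]

lemma iter_deriv_zero (ℓ : ℕ) : derivative^[ℓ] (0 : Polynomial ℝ) = 0 := by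
  induction ℓ with
  | zero => simp
  | succ m ihm => rw [Function.iterate_succ_apply, map_zero, ihm]

lemma iter_deriv_one_succ (ℓ : ℕ) : derivative^[ℓ + 1] (1 : Polynomial ℝ) = 0 := by
  rw [Function.iterate_succ_apply, derivative_one, iter_deriv_zero]

lemma iter_deriv_linear_mul' (a : ℝ) (Q : Polynomial ℝ) (ℓ : ℕ) :
    derivative^[ℓ] ((1 + C a * X) * Q)
      = (1 + C a * X) * derivative^[ℓ] Q + C ((ℓ : ℝ) * a) * derivative^[ℓ - 1] Q := by
  cases ℓ with
  | zero => simp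
  | succ m =>
    rw [iter_deriv_linear_mul a Q m]
    push_cast
    norm_num

lemma main_pos (v : Sym2 V → ℝ) : ∀ B : Finset (Sym2 V), ∀ W : Finset V, W.Nonempty →
    (∀ f ∈ B, ¬ f.IsDiag ∧ ∀ u ∈ f, u ∈ W) →
    (∀ f ∈ B, -1 ≤ v f ∧ v f ≤ 0) →
    ∀ ℓ : ℕ, ∀ lam : ℝ, 0 ≤ lam → lam ≤ 1 →
    0 ≤ (-1 : ℝ) ^ (ℓ + W.card - 1) * (derivative^[ℓ] (Pg v W B)).eval lam := by
  intro B
  induction B using Finset.strongInductionOn with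
  | _ B ih =>
    intro W hWne hvB hvb ℓ lam h0 h1
    rcases Finset.eq_empty_or_nonempty B with rfl | ⟨e, he⟩
    · -- base case : no edges
      by_cases hc : kcomp W (∅ : Finset (Sym2 V)) = 1
      · have hW1 : W.card = 1 := le_antisymm
          (by simpa using card_le_of_conn ∅ W (by simp) hc) (Finset.card_pos.mpr hWne)
        have hPg : Pg v W ∅ = 1 := by
          rw [Pg, Finset.powerset_empty, Finset.filter_singleton, if_pos hc,
            Finset.sum_singleton]
          simp [hW1]
        rw [hPg]
        cases ℓ with
        | zero => simp [hW1]
        | succ m => simp [iter_deriv_one_succ]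
      · have hPg : Pg v W ∅ = 0 := by
          rw [Pg, Finset.powerset_empty, Finset.filter_singleton, if_neg hc,
            Finset.sum_empty]
        rw [hPg, iter_deriv_zero]
        simp
    · -- inductive step
      obtain ⟨x, y, hxy, rfl⟩ := sym2_exists (hvB e he).1
      have hx : x ∈ W := (hvB _ he).2 x (by simp)
      have hy : y ∈ W := (hvB _ he).2 y (by simp)
      have hBe : B.erase s(x,y) ⊂ B := Finset.erase_ssubset he
      have hvB' : ∀ f ∈ B.erase s(x,y), ¬ f.IsDiag ∧ ∀ u ∈ f, u ∈ W :=
        fun f hf => hvB f (Finset.mem_of_mem_erase hf)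
      have hvb' : ∀ f ∈ B.erase s(x,y), -1 ≤ v f ∧ v f ≤ 0 :=
        fun f hf => hvb f (Finset.mem_of_mem_erase hf)
      have hve := hvb _ he
      obtain ⟨n1, hn1⟩ : ∃ n1, W.card = n1 + 1 :=
        ⟨W.card - 1, by have := Finset.card_pos.mpr hWne; omega⟩
      rw [key_identity v hvB hxy hx hy he]
      rw [iter_deriv_add, iterate_derivative_C_mul, iter_deriv_linear_mul',
        Polynomial.iterate_derivative_sum]
      simp only [eval_add, eval_mul, eval_one, eval_C, eval_X, eval_finset_sum]
      rw [mul_add, mul_add]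
      refine add_nonneg (add_nonneg ?_ ?_) ?_
      · -- (1 + v_e lam) * E1
        have h1p : 0 ≤ 1 + v s(x,y) * lam := by nlinarith [hve.1, hve.2]
        have hIH := ih _ hBe W hWne hvB' hvb' ℓ lam h0 h1
        calc (0:ℝ) ≤ (1 + v s(x,y) * lam)
            * ((-1 : ℝ) ^ (ℓ + W.card - 1) * (derivative^[ℓ] (Pg v W (B.erase s(x,y)))).eval lam) :=
              mul_nonneg h1p hIH
          _ = (-1 : ℝ) ^ (ℓ + W.card - 1)
              * ((1 + v s(x,y) * lam) * (derivative^[ℓ] (Pg v W (B.erase s(x,y)))).eval lam) := by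
              ring
      · -- ℓ v_e * E2
        cases ℓ with
        | zero => simp
        | succ m =>
          have hIH := ih _ hBe W hWne hvB' hvb' m lam h0 h1
          have hEe : m + W.card - 1 = m + n1 := by omega
          rw [hEe] at hIH
          have hE : m + 1 + W.card - 1 = (m + n1) + 1 := by omega
          rw [hE]
          have heq : (-1 : ℝ) ^ (m + n1 + 1)
              * ((m + 1 : ℝ) * v s(x,y) * (derivative^[m + 1 - 1] (Pg v W (B.erase s(x,y)))).eval lam)
              = ((m : ℝ) + 1) * (- v s(x,y))
                * ((-1 : ℝ) ^ (m + n1) * (derivative^[m] (Pg v W (B.erase s(x,y)))).eval lam) := by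
            rw [pow_succ]
            norm_num
            ring
          rw [show (((m : ℕ) + 1 : ℕ) : ℝ) = (m : ℝ) + 1 by push_cast; ring] at *
          rw [heq]
          have hm1 : (0:ℝ) ≤ ((m : ℝ) + 1) * (- v s(x,y)) := by nlinarith [hve.2]
          exact mul_nonneg hm1 hIH
      · -- split part
        rw [Finset.mul_sum, Finset.mul_sum]
        apply Finset.sum_nonneg
        intro Wx hWx
        obtain ⟨hW1, hxWx⟩ := Finset.mem_filter.mp hWx
        obtain ⟨hWsub, hyWx⟩ := Finset.subset_erase.mp (Finset.mem_powerset.mp hW1)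
        have hyWy : y ∈ W \ Wx := Finset.mem_sdiff.mpr ⟨hy, hyWx⟩
        obtain ⟨nx1, hnx1⟩ : ∃ nx1, Wx.card = nx1 + 1 :=
          ⟨Wx.card - 1, by have := Finset.card_pos.mpr ⟨x, hxWx⟩; omega⟩
        obtain ⟨ny1, hny1⟩ : ∃ ny1, (W \ Wx).card = ny1 + 1 :=
          ⟨(W \ Wx).card - 1, by have := Finset.card_pos.mpr ⟨y, hyWy⟩; omega⟩
        have hWcc : (W \ Wx).card + Wx.card = W.card :=
          Finset.card_sdiff_add_card_eq_card hWsub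
        have hBxlt : edgesIn Wx (B.erase s(x,y)) ⊂ B :=
          lt_of_le_of_lt (Finset.filter_subset _ _) hBe
        have hBylt : edgesIn (W \ Wx) (B.erase s(x,y)) ⊂ B :=
          lt_of_le_of_lt (Finset.filter_subset _ _) hBe
        rw [Polynomial.iterate_derivative_mul, eval_finset_sum, Finset.mul_sum, Finset.mul_sum]
        apply Finset.sum_nonneg
        intro k hk
        have hkl : k ≤ ℓ := by
          have := Finset.mem_range.mp hk; omega
        have ihx := ih _ hBxlt Wx ⟨x, hxWx⟩
          (fun f hf => ⟨(hvB f (Finset.mem_of_mem_erase ((Finset.filter_subset _ _) hf))).1,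
            edgesIn_within f hf⟩)
          (fun f hf => hvb f (Finset.mem_of_mem_erase ((Finset.filter_subset _ _) hf)))
          (ℓ - k) lam h0 h1
        have ihy := ih _ hBylt (W \ Wx) ⟨y, hyWy⟩
          (fun f hf => ⟨(hvB f (Finset.mem_of_mem_erase ((Finset.filter_subset _ _) hf))).1,
            edgesIn_within f hf⟩)
          (fun f hf => hvb f (Finset.mem_of_mem_erase ((Finset.filter_subset _ _) hf)))
          k lam h0 h1
        set a : ℝ := (derivative^[ℓ - k] (Pg v Wx (edgesIn Wx (B.erase s(x,y))))).eval lam with ha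
        set b : ℝ := (derivative^[k] (Pg v (W \ Wx) (edgesIn (W \ Wx) (B.erase s(x,y))))).eval lam with hb
        have hpx : ℓ - k + Wx.card - 1 = ℓ - k + nx1 := by omega
        have hqy : k + (W \ Wx).card - 1 = k + ny1 := by omega
        rw [hpx] at ihx
        rw [hqy] at ihy
        have hE : ℓ + W.card - 1 = ℓ + nx1 + ny1 + 1 := by omega
        have hkey : (-1 : ℝ) ^ (ℓ + W.card - 1)
            = -(((-1 : ℝ) ^ (ℓ - k + nx1)) * ((-1 : ℝ) ^ (k + ny1))) := by
          rw [hE, ← pow_add, show ℓ - k + nx1 + (k + ny1) = ℓ + nx1 + ny1 from by omega,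
            pow_succ]
          ring
        rw [nsmul_eq_mul, eval_mul, eval_mul, eval_natCast]
        have hchoose : (0:ℝ) ≤ (ℓ.choose k : ℝ) := by positivity
        have hfin : (-1 : ℝ) ^ (ℓ + W.card - 1) * (v s(x,y) * ((ℓ.choose k : ℝ) * (a * b)))
            = (- v s(x,y)) * (ℓ.choose k : ℝ)
              * (((-1 : ℝ) ^ (ℓ - k + nx1) * a) * ((-1 : ℝ) ^ (k + ny1) * b)) := by
          rw [hkey]; ring
        rw [hfin]
        exact mul_nonneg (mul_nonneg (neg_nonneg.mpr hve.2) hchoose)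
          (mul_nonneg ihx ihy)
end Stmt18Aux

/-- For `-1 ≤ v_e ≤ 0`, the generalized connected sum
`C_G(v,λ) = Σ_{A ⊆ E : (V,A) connected} λ^{|A|-|V|+1} ∏_{e ∈ A} v_e`
satisfies `(-1)^{ℓ+|V|-1} C_G(v,·)^{(ℓ)}(λ) ≥ 0` for `0 ≤ λ ≤ 1` and all `ℓ ≥ 0`. -/
theorem stmt18 {V : Type*} [Fintype V] [DecidableEq V] [Nonempty V]
    (G : SimpleGraph V) [DecidableRel G.Adj] (v : Sym2 V → ℝ)
    (hv : ∀ e ∈ G.edgeFinset, -1 ≤ v e ∧ v e ≤ 0)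
    (F : ℝ → ℝ)
    (hF : ∀ lam : ℝ, F lam
      = ∑ A ∈ G.edgeFinset.powerset.filter
            (fun A => kcomp (Finset.univ : Finset V) A = 1),
          lam ^ (A.card + 1 - Fintype.card V) * ∏ e ∈ A, v e)
    (ℓ : ℕ) (lam : ℝ) (h0 : 0 ≤ lam) (h1 : lam ≤ 1) :
    0 ≤ (-1 : ℝ) ^ (ℓ + Fintype.card V - 1) * iteratedDeriv ℓ F lam := by
  classical
  have hcard : (Finset.univ : Finset V).card = Fintype.card V := Finset.card_univ
  have hP : F = fun z => (Stmt18Aux.Pg v Finset.univ G.edgeFinset).eval z := by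
    funext z
    rw [hF, Stmt18Aux.Pg, Polynomial.eval_finset_sum]
    apply Finset.sum_congr rfl
    intro A hA
    rw [Polynomial.eval_mul, Polynomial.eval_pow, Polynomial.eval_C, Polynomial.eval_X, hcard]
    ring
  have hit : ∀ m : ℕ, iteratedDeriv m F
      = fun z => (Polynomial.derivative^[m] (Stmt18Aux.Pg v Finset.univ G.edgeFinset)).eval z := by
    intro m
    induction m with
    | zero => simpa [iteratedDeriv_zero] using hP
    | succ n ihn =>
      rw [iteratedDeriv_succ, ihn]
      funext z
      rw [Function.iterate_succ_apply']
      exact Polynomial.deriv _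
  rw [hit ℓ]
  have hmain := Stmt18Aux.main_pos v G.edgeFinset Finset.univ Finset.univ_nonempty
    (fun f hf => ⟨G.not_isDiag_of_mem_edgeSet (SimpleGraph.mem_edgeFinset.mp hf), fun u _ => Finset.mem_univ u⟩)
    hv ℓ lam h0 h1
  rw [hcard] at hmain
  simpa using hmain
end
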